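/- arXiv:1504.05409 — 6 statements merged into one kernel-verified Lean document; each statement's English description precedes it below -/
import Mathlib

section
/- Let kappa > 0, let chi: positive integers -> C satisfy |chi(k)| <= kappa for all k, and define sigma(n) by sigma(0)=1 and n·sigma(n) = sum_{k=1}^{n} chi(k)·sigma(n-k). Then for all n >= 0, |sigma(n)| <= binomial(kappa + n - 1, n) = kappa(kappa+1)···(kappa+n-1)/n!. -/
theorem stmt_4 (κ : ℝ) (hκ : 0 < κ) (χ : ℕ → ℂ)
    (hχ : ∀ k : ℕ, 1 ≤ k → ‖χ k‖ ≤ κ)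
    (σ : ℕ → ℂ) (hσ0 : σ 0 = 1)
    (hrec : ∀ n : ℕ, 1 ≤ n → (n : ℂ) * σ n = ∑ k ∈ Finset.Icc 1 n, χ k * σ (n - k)) :
    ∀ n : ℕ, ‖σ n‖ ≤ (∏ j ∈ Finset.range n, (κ + j)) / (n.factorial : ℝ) := by
  set B : ℕ → ℝ := fun n => (∏ j ∈ Finset.range n, (κ + j)) / (n.factorial : ℝ) with hB
  have hBpos : ∀ n, 0 < B n := by
    intro n
    apply div_pos
    · exact Finset.prod_pos fun j _ => by positivity
    · positivity
  have hBsucc : ∀ n : ℕ, (n + 1 : ℝ) * B (n + 1) = (κ + n) * B n := by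
    intro n
    simp only [hB, Finset.prod_range_succ, Nat.factorial_succ, Nat.cast_mul, Nat.cast_add,
      Nat.cast_one]
    field_simp
  have hockey : ∀ n : ℕ, κ * ∑ m ∈ Finset.range n, B m = n * B n := by
    intro n
    induction n with
    | zero => simp
    | succ n ih =>
      rw [Finset.sum_range_succ, mul_add, ih, Nat.cast_succ, hBsucc]
      ring
  intro n
  induction n using Nat.strong_induction_on with
  | _ n ih =>
    match n with
    | 0 => simp [hσ0, hB]
    | Nat.succ m =>
      set n := m + 1
      have hn1 : 1 ≤ n := Nat.succ_le_succ (Nat.zero_le m)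
      have hnorm : (n : ℝ) * ‖σ n‖ ≤ ∑ k ∈ Finset.Icc 1 n, κ * B (n - k) := by
        calc (n : ℝ) * ‖σ n‖ = ‖(n : ℂ) * σ n‖ := by
              rw [norm_mul]; simp
          _ = ‖∑ k ∈ Finset.Icc 1 n, χ k * σ (n - k)‖ := by rw [hrec n hn1]
          _ ≤ ∑ k ∈ Finset.Icc 1 n, ‖χ k * σ (n - k)‖ := norm_sum_le _ _
          _ ≤ ∑ k ∈ Finset.Icc 1 n, κ * B (n - k) := by
              apply Finset.sum_le_sum
              intro k hk
              rw [Finset.mem_Icc] at hk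
              rw [norm_mul]
              have hlt : n - k < n := Nat.sub_lt (lt_of_lt_of_le one_pos hn1) hk.1
              exact mul_le_mul (hχ k hk.1) (ih _ hlt) (norm_nonneg _) hκ.le
      have hsum : ∑ k ∈ Finset.Icc 1 n, κ * B (n - k) = κ * ∑ m ∈ Finset.range n, B m := by
        rw [Finset.mul_sum]
        apply Finset.sum_nbij' (fun k => n - k) (fun m => n - m) <;>
          intros <;> simp_all [Finset.mem_Icc, Finset.mem_range] <;>
          first | omega | (congr 1; omega)
      rw [hsum, hockey] at hnorm
      have hnpos : (0 : ℝ) < n := by exact_mod_cast Nat.lt_of_lt_of_le one_pos hn1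
      have := (mul_le_mul_iff_right₀ hnpos).mp hnorm
      exact this
end

section
/- Let m >= 1 and define sigma(n) by sigma(0)=1 and n·sigma(n) = sum_{k=1}^{min(n,m)} sigma(n-k) for n >= 1 (i.e., chi(k)=1 for 1<=k<=m and chi(k)=0 for k>m). Then sigma(n) >= rho(n/m) for all n >= 0, where rho is the Dickman function defined by rho(u)=1 for 0<=u<=1 and u·rho(u) = integral from 0 to 1 of rho(u-t) dt for u > 1. -/
open MeasureTheory Set intervalIntegral

lemma sigma_pos (m : ℕ) (hm : 1 ≤ m) (σ : ℕ → ℝ) (hσ0 : σ 0 = 1)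
    (hrec : ∀ n : ℕ, 1 ≤ n →
      (n : ℝ) * σ n = ∑ k ∈ Finset.Icc 1 (min n m), σ (n - k)) :
    ∀ n, 0 < σ n := by
  intro n
  induction n using Nat.strong_induction_on with
  | _ n ih =>
    rcases Nat.eq_zero_or_pos n with h0 | h1
    · rw [h0, hσ0]; norm_num
    · have hrn := hrec n h1
      have hsum : 0 < ∑ k ∈ Finset.Icc 1 (min n m), σ (n - k) := by
        apply Finset.sum_pos
        · intro k hk
          simp only [Finset.mem_Icc] at hk
          exact ih _ (by omega)
        · exact ⟨1, by simp [Finset.mem_Icc]; omega⟩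
      have hn : (0:ℝ) < (n:ℝ) := by exact_mod_cast h1
      nlinarith [hrn]

lemma sigma_one (m : ℕ) (hm : 1 ≤ m) (σ : ℕ → ℝ) (hσ0 : σ 0 = 1)
    (hrec : ∀ n : ℕ, 1 ≤ n →
      (n : ℝ) * σ n = ∑ k ∈ Finset.Icc 1 (min n m), σ (n - k)) :
    ∀ n, n ≤ m → σ n = 1 := by
  intro n
  induction n using Nat.strong_induction_on with
  | _ n ih =>
    intro hnm
    rcases Nat.eq_zero_or_pos n with h0 | h1
    · rw [h0, hσ0]
    · have hrn := hrec n h1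
      have hmin : min n m = n := min_eq_left hnm
      rw [hmin] at hrn
      have hsum : ∑ k ∈ Finset.Icc 1 n, σ (n - k) = (n:ℝ) := by
        have : ∀ k ∈ Finset.Icc 1 n, σ (n - k) = (1:ℝ) := by
          intro k hk
          simp only [Finset.mem_Icc] at hk
          exact ih _ (by omega) (by omega)
        rw [Finset.sum_congr rfl this, Finset.sum_const, Nat.card_Icc]
        simp
      rw [hsum] at hrn
      have hn : (0:ℝ) < (n:ℝ) := by exact_mod_cast h1
      field_simp at hrn
      linarith [hrn]



-- if the window at u is not integrable, then ρ u = 0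
lemma rho_zero (ρ : ℝ → ℝ)
    (hρ2 : ∀ u : ℝ, 1 < u → u * ρ u = ∫ t in (0:ℝ)..1, ρ (u - t))
    (u : ℝ) (hu : 1 < u) (hw : ¬ IntervalIntegrable ρ volume (u - 1) u) :
    ρ u = 0 := by
  have hnot : ¬ IntervalIntegrable (fun t => ρ (u - t)) volume 0 1 := by
    intro h
    have h2 := h.comp_sub_left u
    simp only [sub_zero, sub_sub_cancel] at h2
    exact hw h2.symm
  have := hρ2 u hu
  rw [intervalIntegral.integral_undef hnot] at this
  have hu0 : u ≠ 0 := by linarith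
  exact (mul_eq_zero.mp this).resolve_left hu0

-- if the window at u IS integrable (u > 1), value via split integral
lemma rho_eq (ρ : ℝ → ℝ)
    (hρ2 : ∀ u : ℝ, 1 < u → u * ρ u = ∫ t in (0:ℝ)..1, ρ (u - t))
    (u : ℝ) (hu : 1 < u) :
    u * ρ u = ∫ x in (u-1)..u, ρ x := by
  rw [hρ2 u hu, intervalIntegral.integral_comp_sub_left ρ u, sub_zero]

lemma claimA (ρ : ℝ → ℝ)
    (hρ2 : ∀ u : ℝ, 1 < u → u * ρ u = ∫ t in (0:ℝ)..1, ρ (u - t))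
    (a : ℝ) (ha : 1 ≤ a)
    (Hb : ∀ v : ℝ, 0 ≤ v → v ≤ a → 0 ≤ ρ v ∧ ρ v ≤ 1)
    (Hi : IntegrableOn ρ (Icc 0 a))
    (u₀ : ℝ) (hu₀1 : a < u₀) (hu₀2 : u₀ ≤ a + 1/2)
    (hw : IntervalIntegrable ρ volume (u₀ - 1) u₀) :
    ∀ u ∈ Ioc a u₀, 0 ≤ ρ u ∧ ρ u ≤ 1 := by
  -- integrability of pieces for every u ∈ Ioc a u₀
  have hIoc : IntegrableOn ρ (Ioc (u₀ - 1) u₀) := by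
    rwa [intervalIntegrable_iff_integrableOn_Ioc_of_le (by linarith)] at hw
  have key : ∀ u ∈ Ioc a u₀, IntervalIntegrable ρ volume (u-1) a ∧
      IntervalIntegrable ρ volume a u ∧
      u * ρ u = (∫ x in (u-1)..a, ρ x) + ∫ x in a..u, ρ x := by
    rintro u ⟨hau, huu₀⟩
    have h1 : IntervalIntegrable ρ volume (u-1) a := by
      apply MeasureTheory.IntegrableOn.intervalIntegrable
      apply Hi.mono_set
      rw [Set.uIcc_of_le (by linarith)]
      exact Set.Icc_subset_Icc (by linarith) le_rfl
    have h2 : IntervalIntegrable ρ volume a u := by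
      rw [intervalIntegrable_iff_integrableOn_Ioc_of_le (le_of_lt hau)]
      exact hIoc.mono_set (Set.Ioc_subset_Ioc (by linarith) huu₀)
    refine ⟨h1, h2, ?_⟩
    rw [rho_eq ρ hρ2 u (by linarith), ← intervalIntegral.integral_add_adjacent_intervals h1 h2]
  -- uniform bound
  set C : ℝ := 1 + ∫ x in a..u₀, |ρ x| with hC
  have habsint : IntervalIntegrable (fun x => |ρ x|) volume a u₀ :=
    ((key u₀ ⟨hu₀1, le_rfl⟩).2.1).abs
  have habs : ∀ u ∈ Ioc a u₀, |ρ u| ≤ C := by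
    rintro u hu
    obtain ⟨h1, h2, heq⟩ := key u hu
    obtain ⟨hau, huu₀⟩ := hu
    have b1 : (0:ℝ) ≤ ∫ x in (u-1)..a, ρ x := by
      apply intervalIntegral.integral_nonneg (by linarith)
      intro x hx
      exact (Hb x (by rcases hx with ⟨hx1, hx2⟩; linarith) (hx.2)).1
    have b1' : (∫ x in (u-1)..a, ρ x) ≤ 1 := by
      have := intervalIntegral.integral_mono_on (by linarith : u - 1 ≤ a) h1
        (_root_.intervalIntegrable_const (c := (1:ℝ)))
        (fun x hx => (Hb x (by rcases hx with ⟨hx1, hx2⟩; linarith) hx.2).2)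
      rw [intervalIntegral.integral_const, smul_eq_mul, mul_one] at this
      linarith
    have b2 : |∫ x in a..u, ρ x| ≤ ∫ x in a..u, |ρ x| :=
      intervalIntegral.abs_integral_le_integral_abs (le_of_lt hau)
    have b2' : (∫ x in a..u, |ρ x|) ≤ ∫ x in a..u₀, |ρ x| := by
      apply intervalIntegral.integral_mono_interval le_rfl (le_of_lt hau) huu₀ _ habsint
      filter_upwards with x using abs_nonneg _
    have hub : |u * ρ u| ≤ C := by
      rw [heq]
      calc |(∫ x in (u-1)..a, ρ x) + ∫ x in a..u, ρ x|
          ≤ |∫ x in (u-1)..a, ρ x| + |∫ x in a..u, ρ x| := abs_add_le _ _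
        _ ≤ 1 + ∫ x in a..u₀, |ρ x| := by
            rw [abs_of_nonneg b1]; linarith
    have hu1 : 1 ≤ u := by linarith
    calc |ρ u| ≤ u * |ρ u| := by nlinarith [abs_nonneg (ρ u)]
      _ = |u * ρ u| := by rw [abs_mul, abs_of_nonneg (by linarith : (0:ℝ) ≤ u)]
      _ ≤ C := hub
  have hne : (ρ '' Ioc a u₀).Nonempty := ⟨ρ u₀, ⟨u₀, ⟨hu₀1, le_rfl⟩, rfl⟩⟩
  have hbddA : BddAbove (ρ '' Ioc a u₀) := by
    refine ⟨C, ?_⟩; rintro y ⟨x, hx, rfl⟩; exact (abs_le.mp (habs x hx)).2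
  have hbddB : BddBelow (ρ '' Ioc a u₀) := by
    refine ⟨-C, ?_⟩; rintro y ⟨x, hx, rfl⟩; exact (abs_le.mp (habs x hx)).1
  set s : ℝ := sSup (ρ '' Ioc a u₀) with hs
  set i : ℝ := sInf (ρ '' Ioc a u₀) with hi
  -- upper bound
  have hub : ∀ u ∈ Ioc a u₀, ρ u ≤ (max s 1 + 1)/2 := by
    rintro u hu
    obtain ⟨h1, h2, heq⟩ := key u hu
    obtain ⟨hau, huu₀⟩ := hu
    have b1' : (∫ x in (u-1)..a, ρ x) ≤ a + 1 - u := by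
      have := intervalIntegral.integral_mono_on (by linarith : u - 1 ≤ a) h1
        (_root_.intervalIntegrable_const (c := (1:ℝ)))
        (fun x hx => (Hb x (by rcases hx with ⟨hx1, hx2⟩; linarith) hx.2).2)
      rw [intervalIntegral.integral_const, smul_eq_mul, mul_one] at this
      linarith
    have b2 : (∫ x in a..u, ρ x) ≤ (u - a) * max s 1 := by
      have := intervalIntegral.integral_mono_on (le_of_lt hau) h2
        (_root_.intervalIntegrable_const (c := max s 1)) (fun x hx => ?_)
      · rw [intervalIntegral.integral_const, smul_eq_mul] at this
        linarith
      · rcases eq_or_lt_of_le hx.1 with h | h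
        · exact le_trans (Hb x (by linarith [hx.1, ha]; ) (by linarith [h])).2 (le_max_right _ _)
        · exact le_trans (le_csSup hbddA ⟨x, ⟨h, le_trans hx.2 huu₀⟩, rfl⟩) (le_max_left _ _)
    have hM1 : 1 ≤ max s 1 := le_max_right _ _
    have hnum : u * ρ u ≤ 1 + (u - a) * (max s 1 - 1) := by
      rw [heq]; nlinarith
    have hu1 : 1 ≤ u := by linarith
    have hβ : u - a ≤ 1/2 := by linarith
    have hnn : 0 ≤ 1 + (u - a) * (max s 1 - 1) := by nlinarith
    have : ρ u ≤ 1 + (u - a) * (max s 1 - 1) := by nlinarith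
    nlinarith
  have hsle : s ≤ 1 := by
    have hs2 : s ≤ (max s 1 + 1)/2 := by
      apply csSup_le hne
      rintro y ⟨x, hx, rfl⟩; exact hub x hx
    rcases le_or_gt s 1 with h | h
    · exact h
    · rw [max_eq_left (le_of_lt h)] at hs2; linarith
  -- lower bound
  have hlb : ∀ u ∈ Ioc a u₀, min i 0 / 2 ≤ ρ u := by
    rintro u hu
    obtain ⟨h1, h2, heq⟩ := key u hu
    obtain ⟨hau, huu₀⟩ := hu
    have b1 : (0:ℝ) ≤ ∫ x in (u-1)..a, ρ x := by
      apply intervalIntegral.integral_nonneg (by linarith)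
      intro x hx
      exact (Hb x (by rcases hx with ⟨hx1, hx2⟩; linarith) (hx.2)).1
    have b2 : (u - a) * min i 0 ≤ ∫ x in a..u, ρ x := by
      have := intervalIntegral.integral_mono_on (le_of_lt hau)
        (_root_.intervalIntegrable_const (c := min i 0)) h2 (fun x hx => ?_)
      · rw [intervalIntegral.integral_const, smul_eq_mul] at this
        linarith
      · rcases eq_or_lt_of_le hx.1 with h | h
        · exact le_trans (min_le_right _ _) (Hb x (by linarith [ha]) (by linarith [h])).1
        · exact le_trans (min_le_left _ _) (csInf_le hbddB ⟨x, ⟨h, le_trans hx.2 huu₀⟩, rfl⟩)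
    have hm0 : min i 0 ≤ 0 := min_le_right _ _
    have hu1 : 1 ≤ u := by linarith
    have hβ : u - a ≤ 1/2 := by linarith
    have h3 : min i 0 / 2 ≤ u * ρ u := by rw [heq]; nlinarith
    by_cases hneg : 0 ≤ ρ u
    · linarith
    · push_neg at hneg
      have : u * ρ u ≤ ρ u := by nlinarith
      linarith
  have hige : 0 ≤ i := by
    have hi2 : min i 0 / 2 ≤ i := by
      apply le_csInf hne
      rintro y ⟨x, hx, rfl⟩; exact hlb x hx
    rcases le_or_gt 0 i with h | h
    · exact h
    · rw [min_eq_left (le_of_lt h)] at hi2; linarith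
  rintro u hu
  refine ⟨le_trans hige (csInf_le hbddB ⟨u, hu, rfl⟩), le_trans (le_csSup hbddA ⟨u, hu, rfl⟩) hsle⟩



lemma stepL (ρ : ℝ → ℝ) (hρ2 : ∀ u : ℝ, 1 < u → u * ρ u = ∫ t in (0:ℝ)..1, ρ (u - t))
    (a : ℝ) (ha : 1 ≤ a)
    (Hb : ∀ v : ℝ, 0 ≤ v → v ≤ a → 0 ≤ ρ v ∧ ρ v ≤ 1)
    (Hi : IntegrableOn ρ (Icc 0 a)) :
    (∀ v : ℝ, 0 ≤ v → v ≤ a + 1/2 → 0 ≤ ρ v ∧ ρ v ≤ 1) ∧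
      IntegrableOn ρ (Icc 0 (a + 1/2)) := by
  have hbnd : ∀ v : ℝ, 0 ≤ v → v ≤ a + 1/2 → 0 ≤ ρ v ∧ ρ v ≤ 1 := by
    intro v hv0 hv2
    rcases le_or_gt v a with h | h
    · exact Hb v hv0 h
    · by_cases hw : IntervalIntegrable ρ volume (v - 1) v
      · exact claimA ρ hρ2 a ha Hb Hi v h hv2 hw v ⟨h, le_rfl⟩
      · rw [rho_zero ρ hρ2 v (by linarith) hw]; norm_num
  refine ⟨hbnd, ?_⟩
  -- integrability on the new chunk
  set T : Set ℝ := {u : ℝ | u ∈ Ioc a (a + 1/2) ∧ IntervalIntegrable ρ volume (u - 1) u} with hT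
  set b : ℝ := sSup (insert a T) with hb
  have hbddT : BddAbove (insert a T) := by
    refine ⟨a + 1/2, ?_⟩
    rintro x (rfl | hx)
    · linarith
    · exact hx.1.2
  have hab : a ≤ b := le_csSup hbddT (mem_insert _ _)
  have hba : b ≤ a + 1/2 := csSup_le (insert_nonempty _ _) (by
    rintro x (rfl | hx)
    · linarith
    · exact hx.1.2)
  have hmemT : ∀ c ∈ Ioo a b, IntegrableOn ρ (Ioc a c) := by
    rintro c ⟨hc1, hc2⟩
    obtain ⟨x, hx, hcx⟩ := exists_lt_of_lt_csSup (insert_nonempty _ _) hc2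
    rcases hx with rfl | hx
    · linarith
    · have hwin : IntegrableOn ρ (Ioc (x-1) x) := by
        rw [← intervalIntegrable_iff_integrableOn_Ioc_of_le (by linarith)]
        exact hx.2
      exact hwin.mono_set (Set.Ioc_subset_Ioc (by linarith [hx.1.2]) (le_of_lt hcx))
  have hzero : ∀ u ∈ Ioc b (a + 1/2), ρ u = 0 := by
    rintro u ⟨hu1, hu2⟩
    by_cases hw : IntervalIntegrable ρ volume (u - 1) u
    · exact absurd (le_csSup hbddT (mem_insert_of_mem _ ⟨⟨by linarith, hu2⟩, hw⟩)) (not_le.mpr hu1)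
    · exact rho_zero ρ hρ2 u (by linarith) hw
  have hIoo : IntegrableOn ρ (Ioo a b) := by
    rcases eq_or_lt_of_le hab with heq | hab'
    · rw [← heq, Set.Ioo_self]; exact integrableOn_empty
    · set c : ℕ → ℝ := fun n => b - (b - a)/(n + 2) with hc
      have hc1 : ∀ n, a < c n := by
        intro n
        have h2 : (0:ℝ) < (n:ℝ) + 2 := by positivity
        rw [hc]
        have : (b - a)/((n:ℝ) + 2) < b - a := by
          apply div_lt_self (by linarith)
          have := Nat.cast_nonneg (α := ℝ) n
          linarith
        linarith
      have hc2 : ∀ n, c n < b := by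
        intro n
        have : (0:ℝ) < (b - a)/((n:ℝ) + 2) := by
          apply div_pos (by linarith)
          have := Nat.cast_nonneg (α := ℝ) n; linarith
        simp only [hc]; linarith
      have hcov : Ioo a b ⊆ ⋃ n, Ioc a (c n) := by
        rintro x ⟨hx1, hx2⟩
        obtain ⟨n, hn⟩ := exists_nat_ge ((b - a)/(b - x))
        refine Set.mem_iUnion.mpr ⟨n, hx1, ?_⟩
        have hbx : (0:ℝ) < b - x := by linarith
        have hba' : (0:ℝ) < b - a := by linarith
        have h1 : (b - a)/(b - x) ≤ (n:ℝ) + 2 := by linarith [hn]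
        have h2 : b - a ≤ ((n:ℝ) + 2) * (b - x) := by
          rw [div_le_iff₀ hbx] at h1; linarith
        have h3 : (b - a)/((n:ℝ) + 2) ≤ b - x := by
          rw [div_le_iff₀ (by positivity)]; nlinarith
        simp only [hc]; linarith
      have hint : ∀ n : ℕ, IntegrableOn ρ (Ioc a (c n)) := fun n =>
        hmemT (c n) ⟨hc1 n, hc2 n⟩
      have hsub : IntegrableOn ρ (⋃ n, Ioc a (c n)) := by
        constructor
        · exact aestronglyMeasurable_iUnion_iff.mpr fun n => (hint n).aestronglyMeasurable
        · apply MeasureTheory.HasFiniteIntegral.restrict_of_bounded (C := 1)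
          · exact lt_of_le_of_lt (measure_mono (Set.iUnion_subset fun n =>
              Set.Ioc_subset_Icc_self.trans (Set.Icc_subset_Icc le_rfl (le_of_lt (hc2 n)))))
              measure_Icc_lt_top
          · rw [MeasureTheory.ae_restrict_iff' (MeasurableSet.iUnion fun n => measurableSet_Ioc)]
            filter_upwards with x hx
            obtain ⟨n, hn1, hn2⟩ := Set.mem_iUnion.mp hx
            have := hbnd x (by linarith [hn1, ha]) (by linarith [hn2, hc2 n, hba])
            rw [Real.norm_eq_abs, abs_le]
            constructor <;> linarith [this.1, this.2]
      exact hsub.mono_set hcov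
  have hIcc2 : IntegrableOn ρ (Icc b (a + 1/2)) := by
    rw [integrableOn_Icc_iff_integrableOn_Ioc]
    apply (MeasureTheory.integrableOn_congr_fun hzero measurableSet_Ioc).mpr
    exact integrableOn_zero
  have hchunk : IntegrableOn ρ (Ioc a (a + 1/2)) := by
    apply (hIoo.union hIcc2).mono_set
    rintro x ⟨hx1, hx2⟩
    rcases lt_or_ge x b with h | h
    · exact Or.inl ⟨hx1, h⟩
    · exact Or.inr ⟨h, hx2⟩
  have : Icc 0 (a + 1/2) = Icc 0 a ∪ Ioc a (a + 1/2) :=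
    (Set.Icc_union_Ioc_eq_Icc (by linarith) (by linarith)).symm
  rw [this]
  exact Hi.union hchunk

lemma globalBound (ρ : ℝ → ℝ) (hρ1 : ∀ u : ℝ, 0 ≤ u → u ≤ 1 → ρ u = 1)
    (hρ2 : ∀ u : ℝ, 1 < u → u * ρ u = ∫ t in (0:ℝ)..1, ρ (u - t)) :
    ∀ u : ℝ, 0 ≤ u → 0 ≤ ρ u ∧ ρ u ≤ 1 := by
  have aux : ∀ n : ℕ, (∀ v : ℝ, 0 ≤ v → v ≤ 1 + n/2 → 0 ≤ ρ v ∧ ρ v ≤ 1) ∧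
      IntegrableOn ρ (Icc 0 (1 + n/2)) := by
    intro n
    induction n with
    | zero =>
      constructor
      · intro v hv0 hv1
        rw [hρ1 v hv0 (by norm_num at hv1 ⊢; linarith)]; norm_num
      · have : (1:ℝ) + (0:ℕ)/2 = 1 := by norm_num
        rw [this]
        apply (MeasureTheory.integrableOn_congr_fun
          (fun x hx => hρ1 x hx.1 hx.2) measurableSet_Icc).mpr
        simp [MeasureTheory.integrableOn_const, measure_Icc_lt_top]
    | succ n ih =>
      have hcast : (1:ℝ) + ((n:ℕ)+1:ℕ)/2 = (1 + (n:ℝ)/2) + 1/2 := by push_cast; ring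
      have ha : (1:ℝ) ≤ 1 + (n:ℝ)/2 := by
        have := Nat.cast_nonneg (α := ℝ) n; linarith
      obtain ⟨h1, h2⟩ := stepL ρ hρ2 (1 + (n:ℝ)/2) ha ih.1 ih.2
      rw [hcast]
      exact ⟨h1, h2⟩
  intro u hu
  obtain ⟨n, hn⟩ := exists_nat_ge (2*u)
  exact (aux n).1 u hu (by linarith)



theorem main (m : ℕ) (ρ : ℝ → ℝ) (σ : ℕ → ℝ) (hm : 1 ≤ m)
    (hgb : ∀ u : ℝ, 0 ≤ u → 0 ≤ ρ u ∧ ρ u ≤ 1)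
    (hsp : ∀ n, 0 < σ n)
    (hso : ∀ n, n ≤ m → σ n = 1)
    (hρ2 : ∀ u : ℝ, 1 < u → u * ρ u = ∫ t in (0:ℝ)..1, ρ (u - t))
    (hrec : ∀ n : ℕ, 1 ≤ n →
      (n : ℝ) * σ n = ∑ k ∈ Finset.Icc 1 (min n m), σ (n - k)) :
    ∀ n : ℕ, ∀ u : ℝ, (n : ℝ)/m ≤ u → ρ u ≤ σ n := by
  have hm0 : (0:ℝ) < (m:ℝ) := by exact_mod_cast hm
  intro n
  induction n using Nat.strong_induction_on with
  | _ n ih =>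
    intro u hu
    rcases le_or_gt n m with hnm | hnm
    · rw [hso n hnm]
      have h0u : (0:ℝ) ≤ u := le_trans (by positivity) hu
      exact (hgb u h0u).2
    · -- n > m
      have hn1 : (1:ℝ) < (n:ℝ)/m := by
        rw [lt_div_iff₀ hm0]; norm_num; exact_mod_cast hnm
      have hu1 : 1 < u := lt_of_lt_of_le hn1 hu
      by_cases hw : IntervalIntegrable ρ volume (u - 1) u
      · -- window integrable
        have hw' : IntervalIntegrable (fun t => ρ (u - t)) volume 0 1 := by
          have h := hw.comp_sub_left u
          simp only [sub_sub_cancel, sub_self] at h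
          exact h.symm
        have hmem : ∀ k : ℕ, k < m →
            IntervalIntegrable (fun t => ρ (u - t)) volume ((k:ℝ)/m) (((k:ℝ)+1)/m) := by
          intro k hk
          have hk1 : ((k:ℝ)+1)/m ≤ 1 := by
            rw [div_le_one hm0]
            have : (k:ℕ)+1 ≤ m := hk
            exact_mod_cast this
          have hk3 : (k:ℝ)/m ≤ ((k:ℝ)+1)/m := by gcongr; linarith
          apply hw'.mono_set
          rw [Set.uIcc_of_le hk3, Set.uIcc_of_le (zero_le_one)]
          exact Set.Icc_subset_Icc (by positivity) hk1
        have hsplit : ∑ k ∈ Finset.range m,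
            (∫ t in ((k:ℝ)/m)..(((k+1:ℕ):ℝ)/m), ρ (u - t)) = ∫ t in (0:ℝ)..1, ρ (u - t) := by
          have := intervalIntegral.sum_integral_adjacent_intervals
            (a := fun k => (k:ℝ)/m) (n := m) (μ := volume)
            (f := fun t => ρ (u - t)) (fun k hk => by
              have := hmem k hk
              push_cast
              convert this using 2)
          rw [this]
          norm_num
          rw [div_self (ne_of_gt hm0)]
        have hbound : ∀ k ∈ Finset.range m,
            (∫ t in ((k:ℝ)/m)..(((k+1:ℕ):ℝ)/m), ρ (u - t)) ≤ (1/m) * σ (n - (k+1)) := by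
          intro k hk
          rw [Finset.mem_range] at hk
          have hk3 : (k:ℝ)/m ≤ ((k+1:ℕ):ℝ)/m := by gcongr; push_cast; linarith
          have hmono := intervalIntegral.integral_mono_on (μ := volume) hk3
            (by have := hmem k hk; push_cast; convert this using 2)
            (_root_.intervalIntegrable_const (c := σ (n - (k+1))))
            (fun t ht => ?_)
          · rw [intervalIntegral.integral_const, smul_eq_mul] at hmono
            have : ((k+1:ℕ):ℝ)/m - (k:ℝ)/m = 1/m := by field_simp; push_cast; ring
            rw [this] at hmono
            exact hmono
          · apply ih (n - (k+1)) (by omega) (u - t)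
            have hcast : ((n - (k+1) : ℕ) : ℝ) = (n:ℝ) - ((k:ℝ)+1) := by
              have : k+1 ≤ n := by omega
              push_cast [Nat.cast_sub this]
              ring
            rw [hcast, sub_div]
            have ht2 : t ≤ ((k+1:ℕ):ℝ)/m := ht.2
            push_cast at ht2
            linarith [hu]
        have hsum : u * ρ u ≤ (1/m) * ((n:ℝ) * σ n) := by
          rw [hρ2 u hu1, ← hsplit]
          calc ∑ k ∈ Finset.range m, (∫ t in ((k:ℝ)/m)..(((k+1:ℕ):ℝ)/m), ρ (u - t))
              ≤ ∑ k ∈ Finset.range m, (1/m) * σ (n - (k+1)) :=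
                Finset.sum_le_sum hbound
            _ = (1/m) * ∑ k ∈ Finset.range m, σ (n - (k+1)) := by
                rw [Finset.mul_sum]
            _ = (1/m) * ((n:ℝ) * σ n) := by
                have hre : ∑ k ∈ Finset.range m, σ (n - (k+1))
                    = ∑ k ∈ Finset.Icc 1 m, σ (n - k) := by
                  rw [← Finset.Ico_add_one_right_eq_Icc, Finset.sum_Ico_eq_sum_range]
                  have hmm : m + 1 - 1 = m := by omega
                  rw [hmm]
                  exact Finset.sum_congr rfl (fun k _ => by congr 1; omega)
                have hr := hrec n (by omega)
                rw [min_eq_right (le_of_lt hnm)] at hr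
                rw [hre, ← hr]
        have hσn : (0:ℝ) ≤ σ n := (hsp n).le
        have h2 : (1/(m:ℝ)) * ((n:ℝ) * σ n) = ((n:ℝ)/m) * σ n := by ring
        rw [h2] at hsum
        have h3 : ((n:ℝ)/m) * σ n ≤ u * σ n :=
          mul_le_mul_of_nonneg_right hu hσn
        have h4 : u * ρ u ≤ u * σ n := le_trans hsum h3
        exact le_of_mul_le_mul_left h4 (by linarith)
      · rw [rho_zero ρ hρ2 u hu1 hw]
        exact (hsp n).le


theorem stmt_6 (m : ℕ) (hm : 1 ≤ m) (ρ : ℝ → ℝ)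
    (hρ1 : ∀ u : ℝ, 0 ≤ u → u ≤ 1 → ρ u = 1)
    (hρ2 : ∀ u : ℝ, 1 < u → u * ρ u = ∫ t in (0:ℝ)..1, ρ (u - t))
    (σ : ℕ → ℝ) (hσ0 : σ 0 = 1)
    (hrec : ∀ n : ℕ, 1 ≤ n →
      (n : ℝ) * σ n = ∑ k ∈ Finset.Icc 1 (min n m), σ (n - k)) :
    ∀ n : ℕ, ρ ((n : ℝ) / m) ≤ σ n := by
  intro n
  exact main m ρ σ hm (globalBound ρ hρ1 hρ2) (sigma_pos m hm σ hσ0 hrec)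
    (sigma_one m hm σ hσ0 hrec) hρ2 hrec n ((n:ℝ)/m) le_rfl
end

section
/- (Triple convolution identity.) Let F(z) = sum_{n>=0} a_n z^n be holomorphic and nonvanishing on a disc of radius R > r > 0 with a_0 = 1, and write z·F'(z)/F(z) = sum_{n>=1} b_n z^n. Then for every n >= 1, n·a_n = b_n + (1/(2 pi i)) integral_0^1 integral_{|z|=r} (z F'(z)/F(z)) (t z F'(tz)/F(tz)) F(tz) dz/z^{n+1} dt/t. -/
open Metric Complex intervalIntegral Set NNReal ENNReal


lemma coeff_circleIntegral {R r : ℝ} (hr : 0 < r) (hrR : r < R)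
    {f : ℂ → ℂ} {c : ℕ → ℂ}
    (hf : DifferentiableOn ℂ f (Metric.ball 0 R))
    (hs : ∀ z ∈ Metric.ball (0:ℂ) R, HasSum (fun k => c k * z ^ k) (f z)) (k : ℕ) :
    (2 * Real.pi * Complex.I)⁻¹ * (∮ z in C(0, r), f z / z ^ (k + 1)) = c k := by
  set p := FormalMultilinearSeries.ofScalars ℂ c with hp
  have hrad : ∀ s : ℝ≥0, (s : ℝ) < R → (s : ℝ≥0∞) ≤ p.radius := by
    intro s hsR
    refine p.le_radius_of_tendsto (l := 0) ?_
    have h1 : ((s : ℝ) : ℂ) ∈ Metric.ball (0:ℂ) R := by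
      simp [_root_.abs_of_nonneg s.coe_nonneg, hsR]
    have h2 := ((hs _ h1).summable.tendsto_atTop_zero).norm
    simp only [norm_zero] at h2 ⊢
    refine h2.congr fun n => ?_
    rw [hp, FormalMultilinearSeries.ofScalars_norm]
    simp [norm_mul, norm_pow, Complex.norm_real, _root_.abs_of_nonneg s.coe_nonneg]
  set r₀ : ℝ := (r + R) / 2 with hr₀
  have hrr₀ : r < r₀ := by simp only [hr₀]; linarith
  have hr₀R : r₀ < R := by simp only [hr₀]; linarith
  have hr₀0 : 0 < r₀ := hr.trans hrr₀
  have hFP : HasFPowerSeriesOnBall f p 0 (ENNReal.ofReal r₀) := by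
    refine ⟨?_, by simpa using hr₀0, ?_⟩
    · rw [ENNReal.ofReal]
      exact hrad _ (by simpa [Real.coe_toNNReal _ hr₀0.le] using hr₀R)
    · intro y hy
      rw [mem_emetric_ball_zero_iff, ← ofReal_norm,
        ENNReal.ofReal_lt_ofReal_iff hr₀0] at hy
      have hyR : y ∈ Metric.ball (0:ℂ) R := by
        simp only [Metric.mem_ball, dist_zero_right]; linarith
      have heq : (fun n => p n fun _ => y) = fun n => c n * y ^ n :=
        funext fun n => by
          rw [hp, FormalMultilinearSeries.ofScalars_apply_eq]; simp [smul_eq_mul]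
      simp only [zero_add, heq]
      exact hs y hyR
  have hq : HasFPowerSeriesOnBall f (cauchyPowerSeries f 0 r) 0
      (ENNReal.ofReal r) := by
    have hd : DifferentiableOn ℂ f (closedBall (0:ℂ) (r.toNNReal : ℝ)) := by
      refine hf.mono ?_
      rw [Real.coe_toNNReal _ hr.le]
      exact closedBall_subset_ball hrR
    have := hd.hasFPowerSeriesOnBall (R := r.toNNReal) (by simpa using hr)
    rw [Real.coe_toNNReal _ hr.le] at this
    rwa [ENNReal.ofReal]
  have hpq : p = cauchyPowerSeries f 0 r :=
    hFP.hasFPowerSeriesAt.eq_formalMultilinearSeries hq.hasFPowerSeriesAt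
  have h1 : (p k fun _ => (1:ℂ)) = c k := by
    rw [hp, FormalMultilinearSeries.ofScalars_apply_eq]; simp
  rw [hpq, cauchyPowerSeries_apply f 0 r k 1] at h1
  rw [← h1, smul_eq_mul]
  congr 1
  refine circleIntegral.integral_congr hr.le fun z hz => ?_
  simp only [sub_zero, smul_eq_mul, one_div]
  rw [div_eq_mul_inv, pow_succ, mul_inv, ← inv_pow]
  ring

lemma hasSum_mul_deriv {R : ℝ} (hR : 0 < R) {F : ℂ → ℂ} {a : ℕ → ℂ}
    (ha : ∀ z ∈ Metric.ball (0:ℂ) R, HasSum (fun k => a k * z ^ k) (F z)) :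
    ∀ z ∈ Metric.ball (0:ℂ) R,
      HasSum (fun k : ℕ => (k : ℂ) * a k * z ^ k) (z * deriv F z) := by
  intro z hz
  set p := FormalMultilinearSeries.ofScalars ℂ a with hp
  have hrad : (ENNReal.ofReal R) ≤ p.radius := by
    refine ENNReal.le_of_forall_nnreal_lt fun s hs => ?_
    have hsR : (s : ℝ) < R := by
      rw [← ENNReal.ofReal_coe_nnreal, ENNReal.ofReal_lt_ofReal_iff hR] at hs
      exact hs
    refine p.le_radius_of_tendsto (l := 0) ?_
    have h1 : ((s : ℝ) : ℂ) ∈ Metric.ball (0:ℂ) R := by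
      simp [_root_.abs_of_nonneg s.coe_nonneg, hsR]
    have h2 := ((ha _ h1).summable.tendsto_atTop_zero).norm
    simp only [norm_zero] at h2 ⊢
    refine h2.congr fun n => ?_
    rw [hp, FormalMultilinearSeries.ofScalars_norm]
    simp [norm_mul, norm_pow, Complex.norm_real, _root_.abs_of_nonneg s.coe_nonneg]
  have hFP : HasFPowerSeriesOnBall F p 0 (ENNReal.ofReal R) := by
    refine ⟨hrad, by simpa using hR, ?_⟩
    intro y hy
    rw [mem_emetric_ball_zero_iff, ← ofReal_norm,
      ENNReal.ofReal_lt_ofReal_iff hR] at hy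
    have hyR : y ∈ Metric.ball (0:ℂ) R := by
      simp only [Metric.mem_ball, dist_zero_right]; linarith
    have heq : (fun n => p n fun _ => y) = fun n => a n * y ^ n :=
      funext fun n => by
        rw [hp, FormalMultilinearSeries.ofScalars_apply_eq]; simp [smul_eq_mul]
    simp only [zero_add, heq]
    exact ha y hyR
  have hFd := hFP.fderiv
  have hzmem : z ∈ Metric.eball (0:ℂ) (ENNReal.ofReal R) := by
    rw [mem_emetric_ball_zero_iff, ← ofReal_norm,
      ENNReal.ofReal_lt_ofReal_iff hR]
    simpa [Metric.mem_ball, dist_zero_right] using hz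
  have hsum0 := hFd.hasSum (by simpa using hzmem)
  have hsum1 := hsum0.mapL (ContinuousLinearMap.apply ℂ ℂ z)
  simp only [zero_add, ContinuousLinearMap.apply_apply] at hsum1
  have htarget : (fderiv ℂ F z) z = z * deriv F z := by
    have : (fderiv ℂ F z) z = (fderiv ℂ F z) (z • 1) := by simp
    rw [this, map_smul, smul_eq_mul, deriv]
  rw [htarget] at hsum1
  have hterm : (fun n => (p.derivSeries n fun _ => z) z)
      = fun n => ((n+1 : ℕ) : ℂ) * a (n+1) * z ^ (n+1) := by
    funext m
    rw [p.derivSeries_apply_diag, hp, FormalMultilinearSeries.ofScalars_apply_eq]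
    simp [smul_eq_mul]; ring
  rw [hterm] at hsum1
  have := (hasSum_nat_add_iff (f := fun k : ℕ => (k : ℂ) * a k * z ^ k) 1).mp hsum1
  simpa using this


lemma alg1 (A d G t z w : ℂ) (hG : G ≠ 0) (ht : t ≠ 0) :
    t⁻¹ * (A * (t * z * d / G) * G / w) = A * (z * d) / w := by
  rw [mul_assoc A _ G, div_mul_cancel₀ _ hG,
    show A * (t * z * d) = t * (A * (z * d)) from by ring,
    mul_div_assoc, ← mul_assoc, inv_mul_cancel₀ ht, one_mul]

lemma alg2 (A G w : ℂ) (hG : G ≠ 0) : A / G * (G - 1) / w = A / w - A / G / w := by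
  rw [mul_sub, mul_one, _root_.sub_div, div_mul_cancel₀ _ hG]

lemma step2lem {R r : ℝ} (hr : 0 < r) (hrR : r < R) {F : ℂ → ℂ}
    (hol : DifferentiableOn ℂ F (Metric.ball 0 R))
    (hnz : ∀ z ∈ Metric.ball (0:ℂ) R, F z ≠ 0) (hF0 : F 0 = 1) (n : ℕ) :
    (∫ t in (0:ℝ)..1, (∮ z in C(0, r),
        (z * deriv F z / F z) * (z * deriv F ((t:ℂ)*z)) / z ^ (n+1)))
      = ∮ z in C(0, r), (z * deriv F z / F z) * (F z - 1) / z ^ (n+1) := by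
  have hR : (0:ℝ) < R := hr.trans hrR
  have h01 : (0:ℝ) ≤ 1 := by norm_num
  have h2π : (0:ℝ) ≤ 2 * Real.pi := by positivity
  have hd : ContinuousOn (deriv F) (Metric.ball (0:ℂ) R) :=
    (((hol.analyticOnNhd Metric.isOpen_ball).deriv).differentiableOn).continuousOn
  set γ : ℝ → ℂ := circleMap 0 r with hγ
  have hγc : Continuous γ := continuous_circleMap 0 r
  have hγmem : ∀ θ, γ θ ∈ Metric.ball (0:ℂ) R := fun θ =>
    Metric.closedBall_subset_ball hrR
      (Metric.sphere_subset_closedBall (circleMap_mem_sphere 0 hr.le θ))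
  have hγne : ∀ θ, γ θ ≠ 0 := fun θ => circleMap_ne_center hr.ne'
  have htγmem : ∀ (t : ℝ), |t| ≤ 1 → ∀ θ, (t:ℂ) * γ θ ∈ Metric.ball (0:ℂ) R := by
    intro t ht θ
    rw [Metric.mem_ball, dist_zero_right, norm_mul, Complex.norm_real, Real.norm_eq_abs]
    have hns : ‖γ θ‖ = r := by
      have := circleMap_mem_sphere 0 hr.le θ
      simpa [hγ] using this
    rw [hns]
    have h2 : |t| * r ≤ r := mul_le_of_le_one_left hr.le ht
    linarith
  have hFTC : ∀ θ : ℝ, (∫ t in (0:ℝ)..1, γ θ * deriv F ((t:ℂ) * γ θ)) = F (γ θ) - 1 := by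
    intro θ
    have hderiv : ∀ t ∈ Set.uIcc (0:ℝ) 1,
        HasDerivAt (fun s : ℝ => F ((s:ℂ) * γ θ)) (γ θ * deriv F ((t:ℂ) * γ θ)) t := by
      intro t ht
      rw [Set.uIcc_of_le h01] at ht
      have habs : |t| ≤ 1 := abs_le.mpr ⟨by linarith [ht.1], ht.2⟩
      have h1 : HasDerivAt F (deriv F ((t:ℂ) * γ θ)) ((t:ℂ) * γ θ) :=
        (hol.differentiableAt (Metric.isOpen_ball.mem_nhds (htγmem t habs θ))).hasDerivAt
      have h2 : HasDerivAt (fun w : ℂ => w * γ θ) (γ θ) ((t:ℂ)) := hasDerivAt_mul_const _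
      have h3 := h1.comp ((t:ℂ)) h2
      have h4 := h3.comp_ofReal
      simpa [mul_comm] using h4
    have hint : IntervalIntegrable (fun t : ℝ => γ θ * deriv F ((t:ℂ) * γ θ))
        MeasureTheory.volume 0 1 := by
      apply ContinuousOn.intervalIntegrable
      apply ContinuousOn.mul continuousOn_const
      refine hd.comp ((Complex.continuous_ofReal.mul continuous_const).continuousOn) ?_
      intro t ht
      rw [Set.uIcc_of_le h01] at ht
      exact htγmem t (abs_le.mpr ⟨by linarith [ht.1], ht.2⟩) θ
    have := intervalIntegral.integral_eq_sub_of_hasDerivAt hderiv hint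
    simpa [hF0] using this
  set C : ℝ → ℂ := fun θ => (γ θ * I) * (γ θ * deriv F (γ θ) / F (γ θ) / γ θ ^ (n+1)) with hC
  have hCcont : ContinuousOn (fun p : ℝ × ℝ => C p.2 * (γ p.2 * deriv F ((p.1:ℂ) * γ p.2)))
      (Set.Icc (0:ℝ) 1 ×ˢ Set.Icc (0:ℝ) (2*Real.pi)) := by
    have cγ2 : Continuous fun p : ℝ × ℝ => γ p.2 := hγc.comp continuous_snd
    have cd2 : ContinuousOn (fun p : ℝ × ℝ => deriv F (γ p.2))
        (Set.Icc (0:ℝ) 1 ×ˢ Set.Icc (0:ℝ) (2*Real.pi)) :=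
      hd.comp cγ2.continuousOn fun p _ => hγmem p.2
    have cF2 : ContinuousOn (fun p : ℝ × ℝ => F (γ p.2))
        (Set.Icc (0:ℝ) 1 ×ˢ Set.Icc (0:ℝ) (2*Real.pi)) :=
      hol.continuousOn.comp cγ2.continuousOn fun p _ => hγmem p.2
    have cmix : ContinuousOn (fun p : ℝ × ℝ => deriv F ((p.1:ℂ) * γ p.2))
        (Set.Icc (0:ℝ) 1 ×ˢ Set.Icc (0:ℝ) (2*Real.pi)) := by
      refine hd.comp (((Complex.continuous_ofReal.comp continuous_fst).mul cγ2).continuousOn) ?_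
      intro p hp
      exact htγmem p.1 (abs_le.mpr ⟨by linarith [hp.1.1], hp.1.2⟩) p.2
    refine ContinuousOn.mul ?_ (cγ2.continuousOn.mul cmix)
    simp only [hC]
    refine ContinuousOn.mul (cγ2.mul continuous_const).continuousOn ?_
    refine ContinuousOn.div ?_ ((cγ2.pow (n+1)).continuousOn) fun p _ => pow_ne_zero _ (hγne p.2)
    exact (cγ2.continuousOn.mul cd2).div cF2 fun p _ => hnz _ (hγmem p.2)
  have hintg : MeasureTheory.Integrable
      (Function.uncurry fun (t θ : ℝ) => C θ * (γ θ * deriv F ((t:ℂ) * γ θ)))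
      ((MeasureTheory.volume.restrict (Set.Ioc (0:ℝ) 1)).prod
        (MeasureTheory.volume.restrict (Set.Ioc (0:ℝ) (2*Real.pi)))) := by
    rw [MeasureTheory.Measure.prod_restrict]
    refine MeasureTheory.IntegrableOn.mono_set ?_
      (Set.prod_mono Set.Ioc_subset_Icc_self Set.Ioc_subset_Icc_self)
    rw [← MeasureTheory.Measure.volume_eq_prod]
    exact hCcont.integrableOn_compact (isCompact_Icc.prod isCompact_Icc)
  calc (∫ t in (0:ℝ)..1, (∮ z in C(0, r),
        (z * deriv F z / F z) * (z * deriv F ((t:ℂ)*z)) / z ^ (n+1)))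
      = ∫ t in (0:ℝ)..1, ∫ θ in (0:ℝ)..(2*Real.pi),
          C θ * (γ θ * deriv F ((t:ℂ) * γ θ)) := by
        refine intervalIntegral.integral_congr fun t _ => ?_
        simp only [circleIntegral, deriv_circleMap]
        simp only [← hγ]
        refine intervalIntegral.integral_congr fun θ _ => ?_
        simp only [hC, smul_eq_mul]
        ring
    _ = ∫ θ in (0:ℝ)..(2*Real.pi), ∫ t in (0:ℝ)..1,
          C θ * (γ θ * deriv F ((t:ℂ) * γ θ)) := by
        simp only [intervalIntegral.integral_of_le h01, intervalIntegral.integral_of_le h2π]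
        exact MeasureTheory.integral_integral_swap hintg
    _ = ∫ θ in (0:ℝ)..(2*Real.pi), C θ * (F (γ θ) - 1) := by
        refine intervalIntegral.integral_congr fun θ _ => ?_
        rw [intervalIntegral.integral_const_mul, hFTC θ]
    _ = ∮ z in C(0, r), (z * deriv F z / F z) * (F z - 1) / z ^ (n+1) := by
        simp only [circleIntegral, deriv_circleMap]
        simp only [← hγ]
        refine intervalIntegral.integral_congr fun θ _ => ?_
        simp only [hC, smul_eq_mul]
        ring

theorem stmt_8 (R r : ℝ) (hr : 0 < r) (hrR : r < R)
    (F : ℂ → ℂ) (hol : DifferentiableOn ℂ F (Metric.ball 0 R))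
    (hnz : ∀ z ∈ Metric.ball (0:ℂ) R, F z ≠ 0) (hF0 : F 0 = 1)
    (a b : ℕ → ℂ) (ha0 : a 0 = 1) (hb0 : b 0 = 0)
    (ha : ∀ z ∈ Metric.ball (0:ℂ) R, HasSum (fun n => a n * z ^ n) (F z))
    (hb : ∀ z ∈ Metric.ball (0:ℂ) R, HasSum (fun n => b n * z ^ n) (z * deriv F z / F z))
    (n : ℕ) (hn : 1 ≤ n) :
    (n : ℂ) * a n = b n + (2 * Real.pi * Complex.I)⁻¹ *
      ∫ t in (0:ℝ)..1, (∮ z in C(0, r),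
        (z * deriv F z / F z) *
          ((t : ℂ) * z * deriv F ((t : ℂ) * z) / F ((t : ℂ) * z)) * F ((t : ℂ) * z)
          / z ^ (n + 1)) / (t : ℂ) := by
  have hR : (0:ℝ) < R := hr.trans hrR
  have hball : Metric.closedBall (0:ℂ) r ⊆ Metric.ball 0 R := Metric.closedBall_subset_ball hrR
  have hd : DifferentiableOn ℂ (deriv F) (Metric.ball 0 R) :=
    ((hol.analyticOnNhd Metric.isOpen_ball).deriv).differentiableOn
  have hdF : DifferentiableOn ℂ (fun z => z * deriv F z) (Metric.ball 0 R) :=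
    differentiableOn_id.mul hd
  have hL : DifferentiableOn ℂ (fun z => z * deriv F z / F z) (Metric.ball 0 R) :=
    hdF.div hol hnz
  have hsphere : Metric.sphere (0:ℂ) r ⊆ Metric.ball 0 R :=
    (Metric.sphere_subset_closedBall).trans hball
  have hmem : ∀ (t : ℝ), t ∈ Set.Icc (0:ℝ) 1 → ∀ z ∈ Metric.sphere (0:ℂ) r,
      (t:ℂ) * z ∈ Metric.ball (0:ℂ) R := by
    intro t ht z hz
    rw [Metric.mem_sphere, dist_zero_right] at hz
    rw [Metric.mem_ball, dist_zero_right, norm_mul, Complex.norm_real, hz,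
      Real.norm_eq_abs]
    have h1 : |t| ≤ 1 := abs_le.mpr ⟨by linarith [ht.1], ht.2⟩
    have h2 : |t| * r ≤ r := mul_le_of_le_one_left hr.le h1
    linarith
  have hcoefL : (2 * Real.pi * Complex.I)⁻¹ *
      (∮ z in C(0, r), (z * deriv F z / F z) / z ^ (n+1)) = b n :=
    coeff_circleIntegral hr hrR hL hb n
  have hcoefdF : (2 * Real.pi * Complex.I)⁻¹ *
      (∮ z in C(0, r), (z * deriv F z) / z ^ (n+1)) = (n : ℂ) * a n :=
    coeff_circleIntegral hr hrR hdF (hasSum_mul_deriv hR ha) n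
  have step1 : (∫ t in (0:ℝ)..1, (∮ z in C(0, r),
        (z * deriv F z / F z) *
          ((t : ℂ) * z * deriv F ((t : ℂ) * z) / F ((t : ℂ) * z)) * F ((t : ℂ) * z)
          / z ^ (n + 1)) / (t : ℂ))
      = ∫ t in (0:ℝ)..1, (∮ z in C(0, r),
          (z * deriv F z / F z) * (z * deriv F ((t:ℂ)*z)) / z ^ (n+1)) := by
    refine intervalIntegral.integral_congr_ae (MeasureTheory.ae_of_all _ fun t ht => ?_)
    rw [Set.uIoc_of_le (by norm_num : (0:ℝ) ≤ 1)] at ht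
    obtain ⟨ht0, ht1⟩ := ht
    rw [div_eq_mul_inv, mul_comm, ← circleIntegral.integral_const_mul]
    refine circleIntegral.integral_congr hr.le fun z hz => ?_
    have hFz : F ((t:ℂ)*z) ≠ 0 := hnz _ (hmem t ⟨ht0.le, ht1⟩ z hz)
    have htne : (t:ℂ) ≠ 0 := by exact_mod_cast ht0.ne'
    exact alg1 _ _ _ _ _ _ hFz htne
  have step2 : (∫ t in (0:ℝ)..1, (∮ z in C(0, r),
        (z * deriv F z / F z) * (z * deriv F ((t:ℂ)*z)) / z ^ (n+1)))
      = ∮ z in C(0, r), (z * deriv F z / F z) * (F z - 1) / z ^ (n+1) :=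
    step2lem hr hrR hol hnz hF0 n
  have step3 : (∮ z in C(0, r), (z * deriv F z / F z) * (F z - 1) / z ^ (n+1))
      = (∮ z in C(0, r), (z * deriv F z) / z ^ (n+1))
        - ∮ z in C(0, r), (z * deriv F z / F z) / z ^ (n+1) := by
    have hc1 : CircleIntegrable (fun z => (z * deriv F z) / z^(n+1)) 0 r := by
      refine ContinuousOn.circleIntegrable hr.le ?_
      refine ((hdF.continuousOn.mono hsphere).div (continuousOn_pow _) ?_)
      intro z hz
      rw [Metric.mem_sphere, dist_zero_right] at hz
      exact pow_ne_zero _ (by intro h; rw [h] at hz; simp at hz; linarith)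
    have hc2 : CircleIntegrable (fun z => (z * deriv F z / F z) / z^(n+1)) 0 r := by
      refine ContinuousOn.circleIntegrable hr.le ?_
      refine ((hL.continuousOn.mono hsphere).div (continuousOn_pow _) ?_)
      intro z hz
      rw [Metric.mem_sphere, dist_zero_right] at hz
      exact pow_ne_zero _ (by intro h; rw [h] at hz; simp at hz; linarith)
    rw [← circleIntegral.integral_sub hc1 hc2]
    refine circleIntegral.integral_congr hr.le fun z hz => ?_
    have hFz : F z ≠ 0 := hnz _ (hsphere hz)
    exact alg2 _ _ _ hFz
  rw [step1, step2, step3, mul_sub, hcoefdF, hcoefL]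
  ring
end

section
/- Suppose |chi(k)| <= kappa for all k >= 1 and let sigma(n) be defined by sigma(0)=1 and n·sigma(n) = sum_{k=1}^n chi(k) sigma(n-k). If sigma(n) = 0 for all n >= K+1 for some K >= 0, then the polynomial F(z) = sum_{n=0}^{K} sigma(n) z^n factors as prod_{j=1}^{K'} (1 - alpha_j z) with all |alpha_j| <= 1 (K' <= K), and at most floor(kappa) of the alpha_j satisfy |alpha_j| = 1. -/
open Polynomial PowerSeries



lemma geomAux (α : ℂ) :
    (PowerSeries.mk fun n => α ^ n) * (1 - PowerSeries.C α * PowerSeries.X) = 1 := by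
  ext n
  rw [mul_sub, mul_one, map_sub]
  cases n with
  | zero => simp
  | succ n =>
    rw [show (PowerSeries.mk fun n => α ^ n) * (PowerSeries.C α * PowerSeries.X)
        = (PowerSeries.C α * PowerSeries.mk fun n => α ^ n) * PowerSeries.X by ring,
      PowerSeries.coeff_succ_mul_X]
    simp [pow_succ, mul_comm]

lemma powerSumAux {K' : ℕ} (α : Fin K' → ℂ) (χ σ : ℕ → ℂ)
    (hσ : ∀ n, σ n = (∏ j, (1 - Polynomial.C (α j) * Polynomial.X)).coeff n)
    (hrec : ∀ n : ℕ, 1 ≤ n → (n : ℂ) * σ n = ∑ k ∈ Finset.Icc 1 n, χ k * σ (n - k)) :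
    ∀ l : ℕ, 1 ≤ l → χ l = -∑ j, α j ^ l := by
  classical
  set F : Polynomial ℂ := ∏ j, (1 - Polynomial.C (α j) * Polynomial.X) with hF
  set G : PowerSeries ℂ := PowerSeries.mk fun k => if k = 0 then 0 else χ k with hG
  set h : Fin K' → PowerSeries ℂ := fun j => PowerSeries.mk fun n => α j ^ n with hh
  have hcoeF : ∀ j, (((1 - Polynomial.C (α j) * Polynomial.X) : Polynomial ℂ) : PowerSeries ℂ)
      = 1 - PowerSeries.C (α j) * PowerSeries.X := by
    intro j
    push_cast
    rfl
  have hFcoe : ((F : Polynomial ℂ) : PowerSeries ℂ)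
      = ∏ j, (1 - PowerSeries.C (α j) * PowerSeries.X) := by
    rw [hF, ← Polynomial.coeToPowerSeries.ringHom_apply, map_prod]
    exact Finset.prod_congr rfl fun j _ => by rw [Polynomial.coeToPowerSeries.ringHom_apply,
      hcoeF]
  -- step2
  have step2 : ((F : Polynomial ℂ) : PowerSeries ℂ) * ∏ j, h j = 1 := by
    rw [hFcoe, ← Finset.prod_mul_distrib]
    refine Finset.prod_eq_one fun j _ => ?_
    rw [mul_comm]
    exact geomAux (α j)
  -- step1
  have step1 : G * ((F : Polynomial ℂ) : PowerSeries ℂ)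
      = PowerSeries.X * ((Polynomial.derivative F : Polynomial ℂ) : PowerSeries ℂ) := by
    ext n
    cases n with
    | zero =>
      rw [show (PowerSeries.X : PowerSeries ℂ) * _ =
        ((Polynomial.derivative F : Polynomial ℂ) : PowerSeries ℂ) * PowerSeries.X by ring]
      simp [PowerSeries.coeff_mul, Finset.Nat.antidiagonal_zero, hG]
    | succ n =>
      rw [PowerSeries.coeff_mul, Finset.Nat.sum_antidiagonal_eq_sum_range_succ_mk,
        show (PowerSeries.X : PowerSeries ℂ) * _ =
          ((Polynomial.derivative F : Polynomial ℂ) : PowerSeries ℂ) * PowerSeries.X by ring,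
        PowerSeries.coeff_succ_mul_X, Polynomial.coeff_coe, Polynomial.coeff_derivative]
      have hrn := hrec (n + 1) (by omega)
      rw [← Finset.Ico_add_one_right_eq_Icc, Finset.sum_Ico_eq_sum_range] at hrn
      simp only [Nat.add_sub_cancel, show n + 1 + 1 - 1 = n + 1 from rfl] at hrn
      rw [Finset.sum_range_succ']
      simp only [hG, PowerSeries.coeff_mk, Polynomial.coeff_coe]
      rw [← hσ (n + 1)]
      simp only [Nat.succ_ne_zero, if_false, if_true, ite_true, ite_false, zero_mul, add_zero]
      calc ∑ i ∈ Finset.range (n + 1), χ (i + 1) * (F.coeff (n + 1 - (i + 1)))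
          = ∑ i ∈ Finset.range (n + 1), χ (1 + i) * σ (n + 1 - (1 + i)) := by
            refine Finset.sum_congr rfl fun i _ => ?_
            rw [← hσ, add_comm 1 i]
        _ = (↑(n + 1) : ℂ) * σ (n + 1) := by rw [← hrn]
        _ = σ (n + 1) * (↑n + 1) := by push_cast; ring
  -- step3
  have hunit : G = (G * ((F : Polynomial ℂ) : PowerSeries ℂ)) * ∏ j, h j := by
    rw [mul_assoc, step2, mul_one]
  rw [step1] at hunit
  -- derivative
  have hder : Polynomial.derivative F = ∑ j, (∏ i ∈ Finset.univ.erase j,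
      (1 - Polynomial.C (α i) * Polynomial.X)) * (- Polynomial.C (α j)) := by
    rw [hF, Finset.prod_eq_multiset_prod, Polynomial.derivative_prod,
      Finset.sum_eq_multiset_sum]
    congr 1
    refine Multiset.map_congr rfl fun j hj => ?_
    rw [← Finset.erase_val, ← Finset.prod_eq_multiset_prod]
    congr 1
    simp
  -- step5
  have step5 : G = ∑ j, (- PowerSeries.C (α j)) * (PowerSeries.X * h j) := by
    rw [hunit, hder, ← Polynomial.coeToPowerSeries.ringHom_apply, map_sum,
      Finset.mul_sum, Finset.sum_mul]
    refine Finset.sum_congr rfl fun j _ => ?_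
    rw [map_mul, map_neg, Polynomial.coeToPowerSeries.ringHom_apply,
      Polynomial.coeToPowerSeries.ringHom_apply, Polynomial.coe_C]
    have hEj : (((∏ i ∈ Finset.univ.erase j, (1 - Polynomial.C (α i) * Polynomial.X)) :
        Polynomial ℂ) : PowerSeries ℂ) * ∏ i, h i = h j := by
      have hone : ∀ i ∈ Finset.univ.erase j,
          (Polynomial.coeToPowerSeries.ringHom (1 - Polynomial.C (α i) * Polynomial.X)) * h i
          = 1 := by
        intro i _
        rw [Polynomial.coeToPowerSeries.ringHom_apply, hcoeF, mul_comm]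
        exact geomAux (α i)
      have h1 : (∏ i ∈ Finset.univ.erase j,
          Polynomial.coeToPowerSeries.ringHom (1 - Polynomial.C (α i) * Polynomial.X)) *
          ∏ i ∈ Finset.univ.erase j, h i = 1 := by
        rw [← Finset.prod_mul_distrib, Finset.prod_congr rfl hone, Finset.prod_const_one]
      rw [← Polynomial.coeToPowerSeries.ringHom_apply, map_prod,
        ← Finset.mul_prod_erase Finset.univ h (Finset.mem_univ j), mul_left_comm, h1, mul_one]
    calc PowerSeries.X * ((((∏ i ∈ Finset.univ.erase j, (1 - Polynomial.C (α i) * Polynomial.X)) : Polynomial ℂ) : PowerSeries ℂ) * (- PowerSeries.C (α j))) * ∏ i, h i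
        = (- PowerSeries.C (α j)) * (PowerSeries.X * ((((∏ i ∈ Finset.univ.erase j, (1 - Polynomial.C (α i) * Polynomial.X)) : Polynomial ℂ) : PowerSeries ℂ) * ∏ i, h i)) := by ring
      _ = _ := by rw [hEj]
  -- conclude
  intro l hl
  obtain ⟨m, rfl⟩ : ∃ m, l = m + 1 := ⟨l - 1, by omega⟩
  have hcl := congrArg (PowerSeries.coeff (m + 1)) step5
  rw [hG] at hcl
  simp only [PowerSeries.coeff_mk, if_neg (Nat.succ_ne_zero m)] at hcl
  rw [map_sum] at hcl
  rw [hcl, ← Finset.sum_neg_distrib]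
  refine Finset.sum_congr rfl fun j _ => ?_
  rw [show (- PowerSeries.C (α j)) * (PowerSeries.X * h j)
      = -(PowerSeries.C (α j) * ((h j) * PowerSeries.X)) by ring]
  rw [map_neg, PowerSeries.coeff_C_mul, PowerSeries.coeff_succ_mul_X, hh]
  simp only [PowerSeries.coeff_mk]
  rw [pow_succ]
  ring


lemma recAux {ι : Type*} [Fintype ι] (β : ι → ℂ) (hβ : ∀ j, ‖β j‖ = 1)
    (ε : ℝ) (hε : 0 < ε) (N : ℕ) :
    ∃ l : ℕ, N ≤ l ∧ 1 ≤ l ∧ ∀ j, ‖β j ^ l - 1‖ < ε := by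
  set u : ℕ → (ι → ℂ) := fun t j => β j ^ ((N + 1) * (t + 1)) with hu
  have hmem : ∀ t, u t ∈ Metric.closedBall (0 : ι → ℂ) 1 := by
    intro t
    rw [Metric.mem_closedBall, dist_zero_right, pi_norm_le_iff_of_nonneg zero_le_one]
    intro j
    simp [hu, norm_pow, hβ j]
  obtain ⟨x, -, φ, hφ, hlim⟩ :=
    (isCompact_closedBall (0 : ι → ℂ) 1).tendsto_subseq hmem
  rw [Metric.tendsto_atTop] at hlim
  obtain ⟨T, hT⟩ := hlim (ε / 2) (by linarith)
  simp only [Function.comp_apply] at hT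
  have h1 := hT T le_rfl
  have h2 := hT (T + 1) (by omega)
  have hd : dist (u (φ (T + 1))) (u (φ T)) < ε := by
    calc dist (u (φ (T + 1))) (u (φ T)) ≤ dist (u (φ (T+1))) x + dist (u (φ T)) x :=
      dist_triangle_right _ _ _
    _ < ε := by linarith
  have hφlt : φ T < φ (T + 1) := hφ (by omega)
  set a := (N + 1) * (φ T + 1) with ha
  set b := (N + 1) * (φ (T + 1) + 1) with hb
  have hab : a + (N + 1) ≤ b := by
    have : (N + 1) * (φ T + 1) + (N + 1) = (N + 1) * (φ T + 2) := by ring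
    rw [ha, hb, this]
    exact Nat.mul_le_mul_left _ (by omega)
  refine ⟨b - a, by omega, by omega, ?_⟩
  intro j
  have hco : dist (u (φ (T + 1)) j) (u (φ T) j) < ε :=
    lt_of_le_of_lt (dist_le_pi_dist _ _ j) hd
  rw [dist_eq_norm] at hco
  have hfac : u (φ (T + 1)) j - u (φ T) j = β j ^ a * (β j ^ (b - a) - 1) := by
    rw [hu]
    simp only
    rw [mul_sub, mul_one, ← pow_add]
    congr 2
    omega
  rw [hfac, norm_mul, norm_pow, hβ j, one_pow, one_mul] at hco
  exact hco


lemma normLeOneAux {K' : ℕ} (α : Fin K' → ℂ) (κ : ℝ)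
    (hp : ∀ l : ℕ, 1 ≤ l → ‖∑ j, α j ^ l‖ ≤ κ) : ∀ j, ‖α j‖ ≤ 1 := by
  classical
  by_contra hcon
  push_neg at hcon
  obtain ⟨j0, hj0⟩ := hcon
  have hne : (Finset.univ : Finset (Fin K')).Nonempty := ⟨j0, Finset.mem_univ j0⟩
  set ρ : ℝ := Finset.univ.sup' hne (fun j => ‖α j‖) with hρdef
  have hle : ∀ j, ‖α j‖ ≤ ρ := fun j => Finset.le_sup' (fun j => ‖α j‖) (Finset.mem_univ j)
  have hρ1 : 1 < ρ := lt_of_lt_of_le hj0 (hle j0)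
  have hρ0 : 0 < ρ := by linarith
  set S : Finset (Fin K') := Finset.univ.filter (fun j => ‖α j‖ = ρ) with hS
  have hSne : S.Nonempty := by
    obtain ⟨b, hb, hbe⟩ := Finset.exists_mem_eq_sup' hne (fun j => ‖α j‖)
    exact ⟨b, by rw [hS, Finset.mem_filter]; exact ⟨hb, hbe.symm⟩⟩
  have hm1 : 1 ≤ (S.card : ℝ) := by
    have := Finset.card_pos.2 hSne
    exact_mod_cast this
  -- bound outside S
  have hρ' : ∃ ρ' : ℝ, 0 ≤ ρ' ∧ ρ' < ρ ∧ ∀ j ∉ S, ‖α j‖ ≤ ρ' := by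
    by_cases hc : (Finset.univ \ S).Nonempty
    · refine ⟨(Finset.univ \ S).sup' hc (fun j => ‖α j‖), ?_, ?_, ?_⟩
      · obtain ⟨b, hb, hbe⟩ := Finset.exists_mem_eq_sup' hc (fun j => ‖α j‖)
        rw [hbe]; positivity
      · rw [Finset.sup'_lt_iff]
        intro j hj
        rw [Finset.mem_sdiff, hS, Finset.mem_filter] at hj
        exact lt_of_le_of_ne (hle j) (fun h => hj.2 ⟨Finset.mem_univ j, h⟩)
      · intro j hj
        exact Finset.le_sup' (fun j => ‖α j‖) (Finset.mem_sdiff.2 ⟨Finset.mem_univ j, hj⟩)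
    · exact ⟨0, le_refl 0, hρ0, fun j hj => absurd ⟨Finset.mem_univ j, hj⟩
        (fun h => hc ⟨j, Finset.mem_sdiff.2 h⟩)⟩
  obtain ⟨ρ', hρ'0, hρ'lt, hρ'le⟩ := hρ'
  -- eventual bounds
  have hr1 : ρ' / ρ < 1 := (div_lt_one hρ0).2 hρ'lt
  have hr0 : 0 ≤ ρ' / ρ := div_nonneg hρ'0 (le_of_lt hρ0)
  have hev1 : ∀ᶠ l : ℕ in Filter.atTop, (K' : ℝ) * (ρ' / ρ) ^ l < 1 / 4 := by
    have := (tendsto_pow_atTop_nhds_zero_of_lt_one hr0 hr1).const_mul (K' : ℝ)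
    rw [mul_zero] at this
    exact this.eventually_lt_const (by norm_num)
  have hev2 : ∀ᶠ l : ℕ in Filter.atTop, 4 * (κ + 1) < ρ ^ l :=
    (tendsto_pow_atTop_atTop_of_one_lt hρ1).eventually_gt_atTop _
  obtain ⟨N, hN⟩ := Filter.eventually_atTop.1 (hev1.and hev2)
  -- pick l
  set β : Fin K' → ℂ := fun j => if j ∈ S then α j / ρ else 1 with hβdef
  have hβ : ∀ j, ‖β j‖ = 1 := by
    intro j
    simp only [hβdef]
    by_cases hj : j ∈ S
    · rw [if_pos hj, norm_div, Complex.norm_real, Real.norm_eq_abs]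
      rw [hS, Finset.mem_filter] at hj
      rw [hj.2, abs_of_pos hρ0, div_self (ne_of_gt hρ0)]
    · rw [if_neg hj, norm_one]
  obtain ⟨l, hlN, hl1, hlβ⟩ := recAux β hβ (1/2) (by norm_num) N
  obtain ⟨hb1, hb2⟩ := hN l hlN
  -- estimates
  have hsplit : ∑ j, α j ^ l = (∑ j ∈ S, α j ^ l) + ∑ j ∈ Finset.univ \ S, α j ^ l := by
    rw [← Finset.sum_sdiff (Finset.subset_univ S)]
    ring
  have hT1 : (ρ : ℝ) ^ l / 2 ≤ ‖∑ j ∈ S, α j ^ l‖ := by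
    have hαβ : ∀ j ∈ S, α j ^ l = (ρ : ℂ) ^ l * β j ^ l := by
      intro j hj
      rw [hβdef]
      simp only [if_pos hj]
      rw [div_pow, mul_div_cancel₀]
      exact pow_ne_zero _ (by exact_mod_cast ne_of_gt hρ0)
    rw [Finset.sum_congr rfl hαβ, ← Finset.mul_sum, norm_mul, norm_pow, Complex.norm_real,
      Real.norm_eq_abs, abs_of_pos hρ0]
    have hlow : (S.card : ℝ) / 2 ≤ ‖∑ j ∈ S, β j ^ l‖ := by
      have h1 : ∑ j ∈ S, β j ^ l = (S.card : ℂ) + ∑ j ∈ S, (β j ^ l - 1) := by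
        rw [Finset.sum_sub_distrib]
        simp
        try ring
      have h2 : ‖∑ j ∈ S, (β j ^ l - 1)‖ ≤ (S.card : ℝ) / 2 := by
        calc ‖∑ j ∈ S, (β j ^ l - 1)‖ ≤ ∑ j ∈ S, ‖β j ^ l - 1‖ := norm_sum_le _ _
          _ ≤ ∑ _j ∈ S, (1/2 : ℝ) := Finset.sum_le_sum fun j _ => le_of_lt (hlβ j)
          _ = (S.card : ℝ) / 2 := by rw [Finset.sum_const, nsmul_eq_mul]; ring
      calc (S.card : ℝ) / 2 = (S.card : ℝ) - (S.card : ℝ)/2 := by ring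
        _ ≤ ‖(S.card : ℂ)‖ - ‖∑ j ∈ S, (β j ^ l - 1)‖ := by
            rw [Complex.norm_natCast]
            linarith
        _ ≤ ‖(S.card : ℂ) + ∑ j ∈ S, (β j ^ l - 1)‖ := by
            have := norm_add_le ((S.card : ℂ) + ∑ j ∈ S, (β j ^ l - 1))
              (- ∑ j ∈ S, (β j ^ l - 1))
            simp only [add_neg_cancel_right, norm_neg] at this
            linarith
        _ = ‖∑ j ∈ S, β j ^ l‖ := by rw [← h1]
    calc ρ ^ l / 2 = ρ ^ l * ((1:ℝ)/2) := by ring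
      _ ≤ ρ ^ l * ((S.card : ℝ) / 2) := by
          apply mul_le_mul_of_nonneg_left (by linarith) (by positivity)
      _ ≤ ρ ^ l * ‖∑ j ∈ S, β j ^ l‖ := by
          apply mul_le_mul_of_nonneg_left hlow (by positivity)
  have hT2 : ‖∑ j ∈ Finset.univ \ S, α j ^ l‖ ≤ (K' : ℝ) * ρ' ^ l := by
    calc ‖∑ j ∈ Finset.univ \ S, α j ^ l‖ ≤ ∑ j ∈ Finset.univ \ S, ‖α j ^ l‖ :=
        norm_sum_le _ _
      _ ≤ ∑ _j ∈ Finset.univ \ S, ρ' ^ l := by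
          refine Finset.sum_le_sum fun j hj => ?_
          rw [norm_pow]
          exact pow_le_pow_left₀ (norm_nonneg _) (hρ'le j (Finset.mem_sdiff.1 hj).2) l
      _ ≤ (K' : ℝ) * ρ' ^ l := by
          rw [Finset.sum_const, nsmul_eq_mul]
          apply mul_le_mul_of_nonneg_right _ (by positivity)
          have hcle : (Finset.univ \ S).card ≤ K' := le_trans (Finset.card_le_univ _) (by simp)
          exact_mod_cast hcle
  have hfinal := hp l hl1
  rw [hsplit] at hfinal
  have htri : ‖∑ j ∈ S, α j ^ l‖ - ‖∑ j ∈ Finset.univ \ S, α j ^ l‖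
      ≤ ‖(∑ j ∈ S, α j ^ l) + ∑ j ∈ Finset.univ \ S, α j ^ l‖ := by
    have := norm_add_le ((∑ j ∈ S, α j ^ l) + ∑ j ∈ Finset.univ \ S, α j ^ l)
      (- ∑ j ∈ Finset.univ \ S, α j ^ l)
    simp only [add_neg_cancel_right, norm_neg] at this
    linarith
  -- numeric contradiction
  have hKr : (K' : ℝ) * ρ' ^ l = ρ ^ l * ((K' : ℝ) * (ρ' / ρ) ^ l) := by
    rw [div_pow]
    field_simp
  have hρl : 0 < ρ ^ l := by positivity
  nlinarith [hb1, hb2, hT1, hT2, hfinal, htri]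


lemma countAux {K' : ℕ} (α : Fin K' → ℂ) (κ : ℝ) (hκ : 0 < κ)
    (h1 : ∀ j, ‖α j‖ ≤ 1)
    (hp : ∀ l : ℕ, 1 ≤ l → ‖∑ j, α j ^ l‖ ≤ κ) :
    (Finset.univ.filter fun j => ‖α j‖ = 1).card ≤ ⌊κ⌋₊ := by
  classical
  set T : Finset (Fin K') := Finset.univ.filter (fun j => ‖α j‖ = 1) with hT
  refine Nat.le_floor ?_
  refine le_of_forall_pos_le_add fun ε hε => ?_
  set δ : ℝ := ε / (2 * K' + 1) with hδdef
  have hδ : 0 < δ := by positivity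
  -- bound outside T
  have hρ' : ∃ ρ' : ℝ, 0 ≤ ρ' ∧ ρ' < 1 ∧ ∀ j ∉ T, ‖α j‖ ≤ ρ' := by
    by_cases hc : (Finset.univ \ T).Nonempty
    · refine ⟨(Finset.univ \ T).sup' hc (fun j => ‖α j‖), ?_, ?_, ?_⟩
      · obtain ⟨b, hb, hbe⟩ := Finset.exists_mem_eq_sup' hc (fun j => ‖α j‖)
        rw [hbe]; positivity
      · rw [Finset.sup'_lt_iff]
        intro j hj
        rw [Finset.mem_sdiff, hT, Finset.mem_filter] at hj
        exact lt_of_le_of_ne (h1 j) (fun h => hj.2 ⟨Finset.mem_univ j, h⟩)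
      · intro j hj
        exact Finset.le_sup' (fun j => ‖α j‖) (Finset.mem_sdiff.2 ⟨Finset.mem_univ j, hj⟩)
    · exact ⟨0, le_refl 0, one_pos, fun j hj => absurd ⟨Finset.mem_univ j, hj⟩
        (fun h => hc ⟨j, Finset.mem_sdiff.2 h⟩)⟩
  obtain ⟨ρ', hρ'0, hρ'lt, hρ'le⟩ := hρ'
  have hev1 : ∀ᶠ l : ℕ in Filter.atTop, (K' : ℝ) * ρ' ^ l < δ := by
    have := (tendsto_pow_atTop_nhds_zero_of_lt_one hρ'0 hρ'lt).const_mul (K' : ℝ)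
    rw [mul_zero] at this
    exact this.eventually_lt_const hδ
  obtain ⟨N, hN⟩ := Filter.eventually_atTop.1 hev1
  set β : Fin K' → ℂ := fun j => if j ∈ T then α j else 1 with hβdef
  have hβ : ∀ j, ‖β j‖ = 1 := by
    intro j
    simp only [hβdef]
    by_cases hj : j ∈ T
    · rw [if_pos hj]
      rw [hT, Finset.mem_filter] at hj
      exact hj.2
    · rw [if_neg hj, norm_one]
  obtain ⟨l, hlN, hl1, hlβ⟩ := recAux β hβ δ hδ N
  have hb1 := hN l hlN
  have hsplit : ∑ j, α j ^ l = (∑ j ∈ T, α j ^ l) + ∑ j ∈ Finset.univ \ T, α j ^ l := by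
    rw [← Finset.sum_sdiff (Finset.subset_univ T)]
    ring
  have hcardK : (T.card : ℝ) ≤ K' := by
    have : T.card ≤ K' := le_trans (Finset.card_le_univ _) (by simp)
    exact_mod_cast this
  have hT1 : (T.card : ℝ) - (T.card : ℝ) * δ ≤ ‖∑ j ∈ T, α j ^ l‖ := by
    have hβα : ∀ j ∈ T, α j ^ l = β j ^ l := fun j hj => by
      simp only [hβdef, if_pos hj]
    rw [Finset.sum_congr rfl hβα]
    have h1' : ∑ j ∈ T, β j ^ l = (T.card : ℂ) + ∑ j ∈ T, (β j ^ l - 1) := by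
      rw [Finset.sum_sub_distrib]
      simp
      try ring
    have h2 : ‖∑ j ∈ T, (β j ^ l - 1)‖ ≤ (T.card : ℝ) * δ := by
      calc ‖∑ j ∈ T, (β j ^ l - 1)‖ ≤ ∑ j ∈ T, ‖β j ^ l - 1‖ := norm_sum_le _ _
        _ ≤ ∑ _j ∈ T, δ := Finset.sum_le_sum fun j _ => le_of_lt (hlβ j)
        _ = (T.card : ℝ) * δ := by rw [Finset.sum_const, nsmul_eq_mul]
    calc (T.card : ℝ) - (T.card : ℝ) * δ
        ≤ ‖(T.card : ℂ)‖ - ‖∑ j ∈ T, (β j ^ l - 1)‖ := by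
          rw [Complex.norm_natCast]
          linarith
      _ ≤ ‖(T.card : ℂ) + ∑ j ∈ T, (β j ^ l - 1)‖ := by
          have := norm_add_le ((T.card : ℂ) + ∑ j ∈ T, (β j ^ l - 1))
            (- ∑ j ∈ T, (β j ^ l - 1))
          simp only [add_neg_cancel_right, norm_neg] at this
          linarith
      _ = ‖∑ j ∈ T, β j ^ l‖ := by rw [← h1']
  have hT2 : ‖∑ j ∈ Finset.univ \ T, α j ^ l‖ ≤ (K' : ℝ) * ρ' ^ l := by
    calc ‖∑ j ∈ Finset.univ \ T, α j ^ l‖ ≤ ∑ j ∈ Finset.univ \ T, ‖α j ^ l‖ :=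
        norm_sum_le _ _
      _ ≤ ∑ _j ∈ Finset.univ \ T, ρ' ^ l := by
          refine Finset.sum_le_sum fun j hj => ?_
          rw [norm_pow]
          exact pow_le_pow_left₀ (norm_nonneg _) (hρ'le j (Finset.mem_sdiff.1 hj).2) l
      _ ≤ (K' : ℝ) * ρ' ^ l := by
          rw [Finset.sum_const, nsmul_eq_mul]
          apply mul_le_mul_of_nonneg_right _ (by positivity)
          have hcle : (Finset.univ \ T).card ≤ K' := le_trans (Finset.card_le_univ _) (by simp)
          exact_mod_cast hcle
  have hfinal := hp l hl1
  rw [hsplit] at hfinal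
  have htri : ‖∑ j ∈ T, α j ^ l‖ - ‖∑ j ∈ Finset.univ \ T, α j ^ l‖
      ≤ ‖(∑ j ∈ T, α j ^ l) + ∑ j ∈ Finset.univ \ T, α j ^ l‖ := by
    have := norm_add_le ((∑ j ∈ T, α j ^ l) + ∑ j ∈ Finset.univ \ T, α j ^ l)
      (- ∑ j ∈ Finset.univ \ T, α j ^ l)
    simp only [add_neg_cancel_right, norm_neg] at this
    linarith
  -- conclude : T.card ≤ κ + ε
  have hδε : ((T.card : ℝ) + 1) * δ ≤ ε := by
    have h2K : (T.card : ℝ) + 1 ≤ 2 * K' + 1 := by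
      have : (0:ℝ) ≤ K' := by positivity
      linarith
    calc ((T.card : ℝ) + 1) * δ ≤ (2 * K' + 1) * δ :=
        mul_le_mul_of_nonneg_right h2K (le_of_lt hδ)
      _ = ε := by
          rw [hδdef]
          field_simp
  nlinarith [hfinal, htri, hT1, hT2, hb1]


open Polynomial


theorem stmt_12 (κ : ℝ) (hκ : 0 < κ) (χ : ℕ → ℂ)
    (hχ : ∀ k : ℕ, 1 ≤ k → ‖χ k‖ ≤ κ)
    (σ : ℕ → ℂ) (hσ0 : σ 0 = 1)
    (hrec : ∀ n : ℕ, 1 ≤ n → (n : ℂ) * σ n = ∑ k ∈ Finset.Icc 1 n, χ k * σ (n - k))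
    (K : ℕ) (hvan : ∀ n : ℕ, K + 1 ≤ n → σ n = 0) :
    ∃ (K' : ℕ) (α : Fin K' → ℂ), K' ≤ K ∧ (∀ j, ‖α j‖ ≤ 1) ∧
      (∀ z : ℂ, ∑ i ∈ Finset.range (K + 1), σ i * z ^ i = ∏ j, (1 - α j * z)) ∧
      (Finset.univ.filter fun j => ‖α j‖ = 1).card ≤ ⌊κ⌋₊ := by
  classical
  set F : Polynomial ℂ := ∑ i ∈ Finset.range (K + 1), Polynomial.C (σ i) * Polynomial.X ^ i
    with hFdef
  have hcoeff : ∀ n, F.coeff n = σ n := by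
    intro n
    rw [hFdef, Polynomial.finset_sum_coeff]
    simp only [Polynomial.coeff_C_mul, Polynomial.coeff_X_pow, mul_ite, mul_one, mul_zero]
    by_cases hn : n < K + 1
    · rw [Finset.sum_eq_single n (fun i _ hne => by simp [Ne.symm hne]) (by simp [hn])]
      simp
    · rw [Finset.sum_eq_zero fun i hi => ?_, (hvan n (by omega)).symm]
      rw [Finset.mem_range] at hi
      simp [show n ≠ i by omega]
  have hF0 : F.coeff 0 = 1 := by rw [hcoeff, hσ0]
  have hFne : F ≠ 0 := fun h => by simp [h] at hF0
  have hdeg : F.natDegree ≤ K := by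
    refine Polynomial.natDegree_le_iff_coeff_eq_zero.2 fun m hm => ?_
    rw [hcoeff]
    exact hvan m (by omega)
  have hcard : Multiset.card F.roots = F.natDegree :=
    (Polynomial.splits_iff_card_roots.1 (IsAlgClosed.splits F))
  have heq := Polynomial.C_leadingCoeff_mul_prod_multiset_X_sub_C hcard
  have hroot_ne : ∀ r ∈ F.roots, r ≠ 0 := by
    intro r hr h0
    have := Polynomial.isRoot_of_mem_roots hr
    rw [h0] at this
    rw [Polynomial.IsRoot, ← Polynomial.coeff_zero_eq_eval_zero, hF0] at this
    exact one_ne_zero this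
  have heval : ∀ z, F.eval z = F.leadingCoeff * (F.roots.map fun r => z - r).prod := by
    intro z
    conv_lhs => rw [← heq]
    rw [Polynomial.eval_mul, Polynomial.eval_C, Polynomial.eval_multiset_prod]
    congr 2
    rw [Multiset.map_map]
    refine Multiset.map_congr rfl fun r _ => ?_
    simp
  -- enumerate inverse roots
  set A : Multiset ℂ := F.roots.map (fun r => r⁻¹) with hA
  set L : List ℂ := A.toList with hL
  set K' : ℕ := L.length with hK'def
  set α : Fin K' → ℂ := fun j => L.get j with hα
  have hK' : K' ≤ K := by
    rw [hK'def, hL, Multiset.length_toList, hA, Multiset.card_map, hcard]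
    exact hdeg
  have hprodA : ∀ g : ℂ → ℂ, ∏ j, g (α j) = (A.map g).prod := by
    intro g
    have h1 : ∏ j, g (α j) = (List.ofFn fun j => g (α j)).prod := by rw [List.prod_ofFn]
    rw [h1, hα, show (fun j : Fin K' => g (L.get j)) = g ∘ L.get from rfl, ← List.map_ofFn,
      List.ofFn_get]
    calc (List.map g L).prod = ((↑(List.map g L) : Multiset ℂ)).prod :=
        (Multiset.prod_coe _).symm
      _ = (Multiset.map g ↑L).prod := by rw [Multiset.map_coe]
      _ = (A.map g).prod := by rw [hL, Multiset.coe_toList]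
  have hc : (F.roots.map fun r => -r⁻¹).prod = F.leadingCoeff := by
    have ht : F.leadingCoeff * (F.roots.map fun r => (0:ℂ) - r).prod = 1 := by
      rw [← heval 0, ← Polynomial.coeff_zero_eq_eval_zero, hF0]
    have hct : (F.roots.map fun r => -r⁻¹).prod * (F.roots.map fun r => (0:ℂ) - r).prod
        = 1 := by
      rw [← Multiset.prod_map_mul]
      rw [Multiset.map_congr rfl (fun r hr => show -r⁻¹ * ((0:ℂ) - r) = 1 by
        field_simp [hroot_ne r hr]; ring)]
      simp
    calc (F.roots.map fun r => -r⁻¹).prod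
        = (F.roots.map fun r => -r⁻¹).prod * (F.leadingCoeff *
            (F.roots.map fun r => (0:ℂ) - r).prod) := by rw [ht, mul_one]
      _ = F.leadingCoeff * ((F.roots.map fun r => -r⁻¹).prod *
            (F.roots.map fun r => (0:ℂ) - r).prod) := by ring
      _ = F.leadingCoeff := by rw [hct, mul_one]
  have hmain : ∀ z : ℂ, ∏ j, (1 - α j * z) = F.eval z := by
    intro z
    rw [show (fun j => 1 - α j * z) = (fun j => (fun a => 1 - a * z) (α j)) from rfl,
      hprodA (fun a => 1 - a * z), hA, Multiset.map_map]
    have : ∀ r ∈ F.roots, ((fun a => 1 - a * z) ∘ fun r => r⁻¹) r = -r⁻¹ * (z - r) := by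
      intro r hr
      simp only [Function.comp_apply]
      field_simp [hroot_ne r hr]
      try ring
    rw [Multiset.map_congr rfl this, Multiset.prod_map_mul, hc, heval]
  have hpolyeq : F = ∏ j, (1 - Polynomial.C (α j) * Polynomial.X) := by
    refine Polynomial.funext fun z => ?_
    rw [← hmain z, Polynomial.eval_prod]
    refine Finset.prod_congr rfl fun j _ => ?_
    simp
  have hσprod : ∀ n, σ n = (∏ j, (1 - Polynomial.C (α j) * Polynomial.X)).coeff n := by
    intro n
    rw [← hpolyeq, hcoeff]
  have hχα := powerSumAux α χ σ hσprod hrec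
  have hp : ∀ l : ℕ, 1 ≤ l → ‖∑ j, α j ^ l‖ ≤ κ := by
    intro l hl
    have : ∑ j, α j ^ l = -χ l := by rw [hχα l hl]; ring
    rw [this, norm_neg]
    exact hχ l hl
  have hle1 := normLeOneAux α κ hp
  refine ⟨K', α, hK', hle1, ?_, countAux α κ hκ hle1 hp⟩
  intro z
  have hevalF : F.eval z = ∑ i ∈ Finset.range (K + 1), σ i * z ^ i := by
    rw [hFdef, Polynomial.eval_finset_sum]
    simp
  rw [← hevalF, ← hmain z]
end

section
/- If kappa = 1 in the previous setting (|chi(k)| <= 1 for all k and sigma(n) = 0 for all n >= K+1), and some inverse root satisfies |alpha_j| = 1, then K' = 1 and F(z) = 1 - e(theta) z for some real theta; equivalently chi(k) = -e(k theta) for all k >= 1. -/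
lemma aux_near_int (m : ℕ) (t : Fin m → ℝ) :
    ∃ l : ℕ, 1 ≤ l ∧ ∀ j, ∃ n : ℤ, |(l : ℝ) * t j - n| < 1/19 := by
  have hb : ∀ (x : ℝ), (⌊(19 : ℝ) * Int.fract x⌋).toNat < 19 := by
    intro x
    have h1 : (19:ℝ) * Int.fract x < 19 := by
      nlinarith [Int.fract_lt_one x, Int.fract_nonneg x]
    have : ⌊(19 : ℝ) * Int.fract x⌋ < 19 := by
      exact_mod_cast Int.floor_lt.2 (by exact_mod_cast h1)
    omega
  set f : ℕ → (Fin m → Fin 19) := fun l j => ⟨(⌊(19 : ℝ) * Int.fract (l * t j)⌋).toNat, hb _⟩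
  have hcard : (Finset.univ : Finset (Fin m → Fin 19)).card < (Finset.range (19 ^ m + 1)).card := by
    simp [Finset.card_univ]
  obtain ⟨a, ha, b, hb', hab, hfab⟩ :=
    Finset.exists_ne_map_eq_of_card_lt_of_maps_to hcard (f := f) (fun a _ => Finset.mem_univ _)
  wlog hlt : a < b generalizing a b
  · exact this b hb' a ha hab.symm hfab.symm (by omega)
  refine ⟨b - a, by omega, fun j => ?_⟩
  have hfj : ⌊(19 : ℝ) * Int.fract (a * t j)⌋ = ⌊(19 : ℝ) * Int.fract (b * t j)⌋ := by
    have heq := congrFun hfab j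
    have h1 : (⌊(19 : ℝ) * Int.fract (a * t j)⌋).toNat = (⌊(19 : ℝ) * Int.fract (b * t j)⌋).toNat := by
      simpa [f, Fin.ext_iff] using heq
    have n1 : 0 ≤ ⌊(19 : ℝ) * Int.fract (a * t j)⌋ :=
      Int.floor_nonneg.2 (mul_nonneg (by norm_num) (Int.fract_nonneg _))
    have n2 : 0 ≤ ⌊(19 : ℝ) * Int.fract (b * t j)⌋ :=
      Int.floor_nonneg.2 (mul_nonneg (by norm_num) (Int.fract_nonneg _))
    omega
  have hd : |Int.fract (b * t j) - Int.fract (a * t j)| < 1/19 := by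
    have h19 := Int.abs_sub_lt_one_of_floor_eq_floor hfj.symm
    rw [abs_lt] at h19 ⊢
    constructor <;> nlinarith [h19.1, h19.2]
  refine ⟨⌊(b : ℝ) * t j⌋ - ⌊(a : ℝ) * t j⌋, ?_⟩
  have hcast : ((b - a : ℕ) : ℝ) = (b : ℝ) - a := by
    push_cast [Nat.cast_sub hlt.le]; ring
  have hkey : ((b - a : ℕ) : ℝ) * t j - ((⌊(b:ℝ) * t j⌋ - ⌊(a:ℝ) * t j⌋ : ℤ) : ℝ)
      = Int.fract ((b:ℝ) * t j) - Int.fract ((a:ℝ) * t j) := by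
    rw [hcast, Int.fract, Int.fract]; push_cast; ring
  rw [hkey]; exact hd


lemma aux_circle (m : ℕ) (u : Fin m → ℂ) (hu : ∀ j, ‖u j‖ = 1) :
    ∃ l : ℕ, 1 ≤ l ∧ ∀ j, ‖u j ^ l - 1‖ < 1 := by
  obtain ⟨l, hl1, hl⟩ := aux_near_int m (fun j => (u j).arg / (2 * Real.pi))
  refine ⟨l, hl1, fun j => ?_⟩
  obtain ⟨n, hn⟩ := hl j
  have hpi : (0:ℝ) < Real.pi := Real.pi_pos
  have hu1 : u j = Complex.exp ((u j).arg * Complex.I) := by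
    have := Complex.norm_mul_exp_arg_mul_I (u j)
    rw [hu j] at this; simpa using this.symm
  set x : ℝ := (l : ℝ) * ((u j).arg / (2 * Real.pi)) - n with hx
  have hre : (l:ℝ) * (u j).arg = x * (2*Real.pi) + n * (2*Real.pi) := by
    rw [hx]; field_simp; ring
  have hupow : u j ^ l = Complex.exp ((x : ℂ) * (2 * Real.pi * Complex.I)) := by
    rw [hu1, ← Complex.exp_nat_mul]
    rw [show ((l:ℂ)) * ((u j).arg * Complex.I)
        = (x:ℂ) * (2 * Real.pi * Complex.I) + (n:ℂ) * (2 * Real.pi * Complex.I) by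
      have := congrArg (Complex.ofReal) hre
      push_cast at this ⊢
      linear_combination this * Complex.I]
    rw [Complex.exp_add]
    rw [Complex.exp_int_mul_two_pi_mul_I, mul_one]
  rw [hupow]
  have habs : ‖(x : ℂ) * (2 * Real.pi * Complex.I)‖ = |x| * (2 * Real.pi) := by
    simp [norm_mul, Complex.norm_real, Real.norm_eq_abs, abs_of_pos hpi]
  have hxlt : |x| < 1/19 := hn
  have hsmall : ‖(x : ℂ) * (2 * Real.pi * Complex.I)‖ ≤ 1 := by
    rw [habs]
    nlinarith [Real.pi_lt_d2, abs_nonneg x]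
  calc ‖Complex.exp ((x:ℂ) * (2 * Real.pi * Complex.I)) - 1‖
      ≤ 2 * ‖(x : ℂ) * (2 * Real.pi * Complex.I)‖ :=
        Complex.norm_exp_sub_one_le hsmall
    _ < 1 := by rw [habs]; nlinarith [Real.pi_lt_d2, abs_nonneg x]

theorem stmt_13 (χ : ℕ → ℂ) (hχ : ∀ k : ℕ, 1 ≤ k → ‖χ k‖ ≤ 1)
    (σ : ℕ → ℂ) (hσ0 : σ 0 = 1)
    (hrec : ∀ n : ℕ, 1 ≤ n → (n : ℂ) * σ n = ∑ k ∈ Finset.Icc 1 n, χ k * σ (n - k))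
    (K : ℕ) (hvan : ∀ n : ℕ, K + 1 ≤ n → σ n = 0)
    (K' : ℕ) (α : Fin K' → ℂ) (hα : ∀ j, ‖α j‖ ≤ 1)
    (hfac : ∀ z : ℂ, ∑ i ∈ Finset.range (K + 1), σ i * z ^ i = ∏ j, (1 - α j * z))
    (hχα : ∀ l : ℕ, 1 ≤ l → χ l = -∑ j, α j ^ l)
    (hone : ∃ j, ‖α j‖ = 1) :
    ∃ θ : ℝ, (∀ z : ℂ, ∑ i ∈ Finset.range (K + 1), σ i * z ^ i =
        1 - Complex.exp (2 * Real.pi * Complex.I * θ) * z) ∧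
      ∀ k : ℕ, 1 ≤ k → χ k = -Complex.exp (2 * Real.pi * Complex.I * θ) ^ k := by
  obtain ⟨j0, hj0⟩ := hone
  set β : ℂ := α j0 with hβdef
  have hβ1 : ‖β‖ = 1 := hj0
  have hβ0 : β ≠ 0 := by
    intro h; rw [h] at hβ1; simp at hβ1
  have hββ : β * (starRingEnd ℂ) β = 1 := by
    rw [Complex.mul_conj, Complex.normSq_eq_norm_sq, hβ1]; norm_num
  have hconjβ0 : (starRingEnd ℂ) β ≠ 0 := by
    simpa using hβ0
  set γ : Fin K' → ℂ := fun j => α j * (starRingEnd ℂ) β with hγdef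
  set u : Fin K' → ℂ := fun j => if γ j = 0 then 1 else γ j / (‖γ j‖ : ℂ) with hudef
  have hu : ∀ j, ‖u j‖ = 1 := by
    intro j
    by_cases h : γ j = 0
    · simp [hudef, h]
    · simp only [hudef, if_neg h]
      rw [norm_div, Complex.norm_real, norm_norm, div_self (norm_ne_zero_iff.mpr h)]
  obtain ⟨l, hl1, hl⟩ := aux_circle K' u hu
  have hl0 : l ≠ 0 := by omega
  -- positivity of real parts
  have hpos : ∀ j, γ j ≠ 0 → 0 < (γ j ^ l).re := by
    intro j h
    have hγu : γ j = (‖γ j‖ : ℂ) * u j := by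
      simp only [hudef, if_neg h]
      have hne : ((‖γ j‖ : ℂ)) ≠ 0 :=
        Complex.ofReal_ne_zero.mpr (norm_ne_zero_iff.mpr h)
      field_simp
    rw [hγu, mul_pow, ← Complex.ofReal_pow, Complex.re_ofReal_mul]
    have h1 : (u j ^ l).re = 1 + (u j ^ l - 1).re := by
      simp [Complex.sub_re]
    have h2 : -‖u j ^ l - 1‖ ≤ (u j ^ l - 1).re := by
      have a1 := Complex.abs_re_le_norm (u j ^ l - 1)
      have a2 := neg_abs_le ((u j ^ l - 1).re)
      linarith
    have h3 : 0 < (u j ^ l).re := by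
      have := hl j
      rw [h1]; linarith
    have h4 : 0 < ‖γ j‖ ^ l := by
      have : 0 < ‖γ j‖ := norm_pos_iff.mpr h
      positivity
    exact mul_pos h4 h3
  have hnonneg : ∀ j, 0 ≤ (γ j ^ l).re := by
    intro j
    by_cases h : γ j = 0
    · simp [h, zero_pow hl0]
    · exact (hpos j h).le
  -- the sum over j ≠ j0 has nonpositive real part
  have hsum : (∑ j ∈ Finset.univ.erase j0, γ j ^ l).re ≤ 0 := by
    have h1 : ∑ j, γ j ^ l = (starRingEnd ℂ) β ^ l * ∑ j, α j ^ l := by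
      rw [Finset.mul_sum]
      exact Finset.sum_congr rfl fun j _ => by rw [hγdef]; ring
    have h2 : (∑ j, α j ^ l) = -χ l := by
      rw [hχα l hl1]; ring
    have h3 : γ j0 ^ l = 1 := by
      have : γ j0 = 1 := by rw [hγdef]; exact hββ
      rw [this, one_pow]
    have h4 : ∑ j ∈ Finset.univ.erase j0, γ j ^ l
        = -((starRingEnd ℂ) β ^ l * χ l) - 1 := by
      rw [Finset.sum_erase_eq_sub (Finset.mem_univ j0), h1, h2, h3]
      ring
    rw [h4]
    have h5 : (-((starRingEnd ℂ) β ^ l * χ l)).re ≤ 1 := by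
      calc (-((starRingEnd ℂ) β ^ l * χ l)).re
          ≤ ‖-((starRingEnd ℂ) β ^ l * χ l)‖ := Complex.re_le_norm _
        _ = ‖β‖ ^ l * ‖χ l‖ := by
            simp [norm_mul, norm_pow]
        _ ≤ 1 := by
            rw [hβ1, one_pow, one_mul]
            exact hχ l hl1
    simp only [Complex.sub_re, Complex.one_re]
    linarith
  -- conclude all other α j vanish
  have key : ∀ j, j ≠ j0 → α j = 0 := by
    intro j hj
    by_contra hα0
    have hγ0 : γ j ≠ 0 := mul_ne_zero hα0 hconjβ0
    have hmem : j ∈ Finset.univ.erase j0 := Finset.mem_erase.2 ⟨hj, Finset.mem_univ j⟩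
    have : (γ j ^ l).re ≤ ∑ i ∈ Finset.univ.erase j0, (γ i ^ l).re :=
      Finset.single_le_sum (fun i _ => hnonneg i) hmem
    rw [← Complex.re_sum] at this
    linarith [hpos j hγ0]
  -- construct θ
  refine ⟨β.arg / (2 * Real.pi), ?_, ?_⟩
  all_goals
    have hexp : Complex.exp (2 * (Real.pi : ℂ) * Complex.I * ((β.arg / (2 * Real.pi) : ℝ) : ℂ)) = β := by
      rw [show (2 * (Real.pi:ℂ) * Complex.I * ((β.arg / (2 * Real.pi) : ℝ) : ℂ))
          = (β.arg : ℂ) * Complex.I by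
        push_cast
        have hπ : (Real.pi : ℂ) ≠ 0 := Complex.ofReal_ne_zero.mpr Real.pi_ne_zero
        field_simp]
      conv_rhs => rw [← Complex.norm_mul_exp_arg_mul_I β]
      rw [hβ1]
      simp
  · intro z
    rw [hfac z, hexp]
    rw [Finset.prod_eq_single j0 (fun b _ hb => by rw [key b hb]; ring) (fun h => absurd (Finset.mem_univ j0) h)]
  · intro k hk
    rw [hχα k hk, hexp]
    congr 1
    rw [Finset.sum_eq_single j0 (fun b _ hb => by rw [key b hb]; exact zero_pow (by omega)) (fun h => absurd (Finset.mem_univ j0) h)]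
end

section
/- For every integer m >= 1, c_m := (1/m) sum_{a=0}^{m-1} |cos(pi a/m)| satisfies c_m = (2/pi)·(1 - 2·sum_{r >= 1, m | r} (-1)^r / (4 r^2 - 1)). -/
open Complex

noncomputable section

instance fact_pi_pos : Fact (0 < Real.pi) := ⟨Real.pi_pos⟩

/-- The Fourier coefficients of `|cos|` on the circle of period `π`. -/
def ccoef : ℤ → ℂ := fun n => 2 / (Real.pi : ℂ) * (-1 : ℂ) ^ n / (1 - 4 * (n : ℂ) ^ 2)

lemma ccoef_denom_ne (n : ℤ) : (1 : ℂ) - 4 * (n : ℂ) ^ 2 ≠ 0 := by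
  intro h
  have h' : ((1 - 4 * n ^ 2 : ℤ) : ℂ) = 0 := by push_cast; linear_combination h
  have h'' : (1 - 4 * n ^ 2 : ℤ) = 0 := by exact_mod_cast h'
  have hk : (0 : ℤ) ≤ n ^ 2 := sq_nonneg n
  set k := n ^ 2
  omega

lemma neg_one_zpow_neg (n : ℤ) : (-1 : ℂ) ^ (-n) = (-1 : ℂ) ^ n := by
  have h : (-1 : ℂ) ^ n * (-1 : ℂ) ^ n = 1 := by
    rw [← zpow_add₀ (by norm_num : (-1 : ℂ) ≠ 0), show n + n = 2 * n by ring, zpow_mul]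
    norm_num
  rw [zpow_neg]
  exact inv_eq_of_mul_eq_one_left h

lemma ccoef_even (n : ℤ) : ccoef (-n) = ccoef n := by
  unfold ccoef
  rw [neg_one_zpow_neg]
  push_cast
  ring

lemma abs_cos_periodic : Function.Periodic (fun x : ℝ => ((|Real.cos x| : ℝ) : ℂ)) Real.pi := by
  intro x
  simp [Real.cos_add_pi]

/-- `|cos|` as a continuous function on `AddCircle π`. -/
def F : C(AddCircle Real.pi, ℂ) :=
  ⟨abs_cos_periodic.lift, Continuous.quotient_liftOn'
    (by continuity : Continuous fun x : ℝ => ((|Real.cos x| : ℝ) : ℂ)) _⟩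

lemma F_apply (x : ℝ) : F (x : AddCircle Real.pi) = ((|Real.cos x| : ℝ) : ℂ) := rfl

lemma coeff_eq (n : ℤ) : fourierCoeff (⇑F) n = ccoef n := by
  have hπ : (Real.pi : ℂ) ≠ 0 := by exact_mod_cast Real.pi_ne_zero
  have h1n : ((1 : ℂ) - 2 * n) ≠ 0 := by
    intro h
    have h' : ((1 - 2 * n : ℤ) : ℂ) = 0 := by push_cast; linear_combination h
    have h'' : (1 - 2 * n : ℤ) = 0 := by exact_mod_cast h'
    omega
  have h2n : ((1 : ℂ) + 2 * n) ≠ 0 := by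
    intro h
    have h' : ((1 + 2 * n : ℤ) : ℂ) = 0 := by push_cast; linear_combination h
    have h'' : (1 + 2 * n : ℤ) = 0 := by exact_mod_cast h'
    omega
  set c₁ : ℂ := ((1 : ℂ) - 2 * n) * I with hc₁def
  set c₂ : ℂ := -(((1 : ℂ) + 2 * n) * I) with hc₂def
  have hc₁ : c₁ ≠ 0 := mul_ne_zero h1n I_ne_zero
  have hc₂ : c₂ ≠ 0 := neg_ne_zero.2 (mul_ne_zero h2n I_ne_zero)
  rw [fourierCoeff_eq_intervalIntegral _ n (-(Real.pi / 2))]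
  have h2 : -(Real.pi / 2) + Real.pi = Real.pi / 2 := by ring
  rw [h2]
  have key : Set.EqOn (fun x : ℝ => (fourier (-n) ((x : ℝ) : AddCircle Real.pi)) • F (x : ℝ))
      (fun x : ℝ => (Complex.exp (c₁ * x) + Complex.exp (c₂ * x)) / 2)
      (Set.uIcc (-(Real.pi / 2)) (Real.pi / 2)) := by
    intro x hx
    have hxI : x ∈ Set.Icc (-(Real.pi / 2)) (Real.pi / 2) := by
      rwa [Set.uIcc_of_le (by linarith [Real.pi_pos])] at hx
    have hcos : |Real.cos x| = Real.cos x :=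
      abs_of_nonneg (Real.cos_nonneg_of_mem_Icc hxI)
    show (fourier (-n) ((x : ℝ) : AddCircle Real.pi)) • F (x : ℝ)
        = (Complex.exp (c₁ * x) + Complex.exp (c₂ * x)) / 2
    rw [F_apply, hcos, fourier_coe_apply, smul_eq_mul, Complex.ofReal_cos, Complex.cos]
    have expand : ∀ A B C : ℂ, Complex.exp A * ((Complex.exp B + Complex.exp C) / 2)
        = (Complex.exp (A + B) + Complex.exp (A + C)) / 2 := by
      intro A B C
      rw [Complex.exp_add, Complex.exp_add]
      ring
    rw [expand]
    have e1 : 2 * (Real.pi : ℂ) * I * (-n : ℤ) * x / (Real.pi : ℂ) + (x : ℂ) * I = c₁ * x := by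
      field_simp [hc₁def]
      rw [hc₁def]; push_cast; ring
    have e2 : 2 * (Real.pi : ℂ) * I * (-n : ℤ) * x / (Real.pi : ℂ) + -(x : ℂ) * I = c₂ * x := by
      field_simp [hc₂def]
      rw [hc₂def]; push_cast; ring
    rw [e1, e2]
  rw [intervalIntegral.integral_congr key]
  have hint : ∀ c : ℂ, IntervalIntegrable (fun x : ℝ => Complex.exp (c * x)) MeasureTheory.volume
      (-(Real.pi / 2)) (Real.pi / 2) := by
    intro c
    exact (Complex.continuous_exp.comp (continuous_const.mul Complex.continuous_ofReal)).intervalIntegrable _ _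
  rw [intervalIntegral.integral_div, intervalIntegral.integral_add (hint c₁) (hint c₂),
    integral_exp_mul_complex hc₁, integral_exp_mul_complex hc₂]
  -- compute the exponentials
  set ε : ℂ := (-1 : ℂ) ^ n with hε
  have hεinv : (-1 : ℂ) ^ (-n) = ε := neg_one_zpow_neg n
  have hexp_n : Complex.exp ((n : ℂ) * ((Real.pi : ℂ) * I)) = ε := by
    rw [Complex.exp_int_mul, Complex.exp_pi_mul_I, hε]
  have hexp_negn : Complex.exp (-(n : ℂ) * ((Real.pi : ℂ) * I)) = ε := by
    have : (-(n : ℂ)) = ((-n : ℤ) : ℂ) := by push_cast; ring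
    rw [this, Complex.exp_int_mul, Complex.exp_pi_mul_I, hεinv]
  have hI2 : Complex.exp (((Real.pi / 2 : ℝ) : ℂ) * I) = I := by
    rw [Complex.exp_mul_I, ← Complex.ofReal_cos, ← Complex.ofReal_sin,
      Real.cos_pi_div_two, Real.sin_pi_div_two]
    simp
  have hI2' : Complex.exp (-(((Real.pi / 2 : ℝ) : ℂ) * I)) = -I := by
    rw [Complex.exp_neg, hI2, Complex.inv_I]
  have hb : ((Real.pi / 2 : ℝ) : ℂ) = (Real.pi : ℂ) / 2 := by push_cast; ring
  have ea : Complex.exp (c₁ * ((Real.pi / 2 : ℝ) : ℂ)) = I * ε := by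
    have harg : c₁ * ((Real.pi / 2 : ℝ) : ℂ) = ((Real.pi / 2 : ℝ) : ℂ) * I + (-(n:ℂ)) * ((Real.pi : ℂ) * I) := by
      rw [hc₁def, hb]; ring
    rw [harg, Complex.exp_add, hI2, hexp_negn]
  have eb : Complex.exp (c₁ * ((-(Real.pi / 2) : ℝ) : ℂ)) = -I * ε := by
    have harg : c₁ * ((-(Real.pi / 2) : ℝ) : ℂ) = -(((Real.pi / 2 : ℝ) : ℂ) * I) + (n : ℂ) * ((Real.pi : ℂ) * I) := by
      rw [hc₁def, hb]; push_cast; ring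
    rw [harg, Complex.exp_add, hI2', hexp_n]
  have ec : Complex.exp (c₂ * ((Real.pi / 2 : ℝ) : ℂ)) = -I * ε := by
    have harg : c₂ * ((Real.pi / 2 : ℝ) : ℂ) = -(((Real.pi / 2 : ℝ) : ℂ) * I) + (-(n:ℂ)) * ((Real.pi : ℂ) * I) := by
      rw [hc₂def, hb]; ring
    rw [harg, Complex.exp_add, hI2', hexp_negn]
  have ed : Complex.exp (c₂ * ((-(Real.pi / 2) : ℝ) : ℂ)) = I * ε := by
    have harg : c₂ * ((-(Real.pi / 2) : ℝ) : ℂ) = ((Real.pi / 2 : ℝ) : ℂ) * I + (n : ℂ) * ((Real.pi : ℂ) * I) := by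
      rw [hc₂def, hb]; push_cast; ring
    rw [harg, Complex.exp_add, hI2, hexp_n]
  rw [ea, eb, ec, ed]
  have d1 : (I * ε - -I * ε) / c₁ = 2 * ε / ((1 : ℂ) - 2 * n) := by
    rw [div_eq_div_iff hc₁ h1n, hc₁def]; ring
  have d2 : (-I * ε - I * ε) / c₂ = 2 * ε / ((1 : ℂ) + 2 * n) := by
    rw [div_eq_div_iff hc₂ h2n, hc₂def]; ring
  rw [d1, d2, ccoef, Complex.real_smul]
  have hd := ccoef_denom_ne n
  push_cast
  field_simp
  have hd' : (1 : ℂ) - (n : ℂ) ^ 2 * 4 ≠ 0 := by rwa [mul_comm] at hd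
  rw [hε]; field_simp; ring

lemma summable_ccoef : Summable ccoef := by
  have hπ : (0 : ℝ) < Real.pi := Real.pi_pos
  have hg : Summable (fun n : ℤ => 1 / ((n : ℝ)) ^ 2 * (2 / Real.pi)) :=
    (Real.summable_one_div_int_pow.2 one_lt_two).mul_right _
  apply Summable.of_norm_bounded_eventually hg
  rw [Filter.eventually_cofinite]
  apply Set.Finite.subset (Set.finite_singleton (0 : ℤ))
  intro n hn
  simp only [Set.mem_setOf_eq, not_le] at hn
  by_contra h0
  simp only [Set.mem_singleton_iff] at h0
  apply absurd hn
  push_neg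
  have hn1 : (1 : ℝ) ≤ (n : ℝ) ^ 2 := by
    have : (1 : ℤ) ≤ n ^ 2 := by
      rcases lt_or_gt_of_ne h0 with h | h <;> nlinarith
    exact_mod_cast this
  have h2 : ((1 : ℂ) - 4 * (n : ℂ) ^ 2) = (((1 - 4 * (n : ℝ) ^ 2 : ℝ)) : ℂ) := by
    push_cast; ring
  have h4 : (2 : ℂ) / (Real.pi : ℂ) = (((2 / Real.pi : ℝ)) : ℂ) := by push_cast; ring
  have hnorm : ‖ccoef n‖ = 2 / Real.pi / |1 - 4 * (n : ℝ) ^ 2| := by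
    rw [ccoef, h2, h4, norm_div, norm_mul, norm_zpow, Complex.norm_real, Complex.norm_real,
      norm_neg, norm_one, one_zpow, mul_one, Real.norm_eq_abs, Real.norm_eq_abs,
      _root_.abs_of_nonneg (by positivity : (0 : ℝ) ≤ 2 / Real.pi)]
  have habs : (n : ℝ) ^ 2 ≤ |1 - 4 * (n : ℝ) ^ 2| := by
    rw [abs_of_nonpos (by nlinarith)]
    nlinarith
  have hpos : (0 : ℝ) < (n : ℝ) ^ 2 := by linarith
  calc ‖ccoef n‖ = 2 / Real.pi / |1 - 4 * (n : ℝ) ^ 2| := hnorm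
    _ ≤ 2 / Real.pi / (n : ℝ) ^ 2 := by gcongr
    _ = 1 / (n : ℝ) ^ 2 * (2 / Real.pi) := by ring

lemma fourier_sum_eq (m : ℕ) (hm : 1 ≤ m) (n : ℤ) :
    (∑ a ∈ Finset.range m, (fourier n (((Real.pi * a / m : ℝ)) : AddCircle Real.pi) : ℂ))
      = if (m : ℤ) ∣ n then (m : ℂ) else 0 := by
  have hπ : (Real.pi : ℂ) ≠ 0 := by exact_mod_cast Real.pi_ne_zero
  have hm0 : (m : ℂ) ≠ 0 := Nat.cast_ne_zero.2 (by omega)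
  have h2πI : (2 * (Real.pi : ℂ) * I) ≠ 0 := by
    simp [hπ, I_ne_zero]
  set z : ℂ := Complex.exp (2 * (Real.pi : ℂ) * I * n / m) with hz
  have hterm : ∀ a ∈ Finset.range m,
      (fourier n (((Real.pi * a / m : ℝ)) : AddCircle Real.pi) : ℂ) = z ^ a := by
    intro a _
    rw [fourier_coe_apply, hz, ← Complex.exp_nat_mul]
    congr 1
    push_cast
    field_simp
  rw [Finset.sum_congr rfl hterm]
  have hzm : z ^ m = 1 := by
    rw [hz, ← Complex.exp_nat_mul]
    have : (m : ℂ) * (2 * (Real.pi : ℂ) * I * n / m) = (n : ℂ) * (2 * Real.pi * I) := by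
      field_simp
    rw [this]
    exact Complex.exp_int_mul_two_pi_mul_I n
  by_cases hdvd : (m : ℤ) ∣ n
  · obtain ⟨k, hk⟩ := id hdvd
    have hz1 : z = 1 := by
      rw [hz]
      have : 2 * (Real.pi : ℂ) * I * n / m = (k : ℂ) * (2 * Real.pi * I) := by
        rw [hk]; push_cast; field_simp
      rw [this]
      exact Complex.exp_int_mul_two_pi_mul_I k
    simp [hz1, hdvd]
  · have hzne : z ≠ 1 := by
      intro h
      rw [hz, Complex.exp_eq_one_iff] at h
      obtain ⟨k, hk⟩ := h
      have h3 : 2 * (Real.pi : ℂ) * I * n = (k : ℂ) * (2 * Real.pi * I) * m := by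
        have := congrArg (· * (m : ℂ)) hk
        simpa [div_mul_cancel₀ _ hm0] using this
      have h4 : (2 * (Real.pi : ℂ) * I) * n = (2 * (Real.pi : ℂ) * I) * (k * m) := by
        linear_combination h3
      have h5 : (n : ℂ) = (k : ℂ) * m := mul_left_cancel₀ h2πI h4
      apply hdvd
      refine ⟨k, ?_⟩
      have : (n : ℂ) = ((m * k : ℤ) : ℂ) := by push_cast; linear_combination h5
      exact_mod_cast this
    rw [geom_sum_eq hzne, hzm]
    simp [hdvd]

end

theorem stmt_16 (m : ℕ) (hm : 1 ≤ m) (S : ℝ)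
    (hS : HasSum (fun s : ℕ =>
      (-1 : ℝ) ^ ((s + 1) * m) / (4 * (((s + 1) * m : ℕ) : ℝ) ^ 2 - 1)) S) :
    (1 / (m : ℝ)) * ∑ a ∈ Finset.range m, |Real.cos (Real.pi * a / m)| =
      (2 / Real.pi) * (1 - 2 * S) := by
  have hπ : (0 : ℝ) < Real.pi := Real.pi_pos
  have hπC : (Real.pi : ℂ) ≠ 0 := by exact_mod_cast Real.pi_ne_zero
  have hm0 : (0 : ℕ) < m := hm
  have hmR : (m : ℝ) ≠ 0 := by exact_mod_cast hm0.ne'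
  have hmC : (m : ℂ) ≠ 0 := by exact_mod_cast hm0.ne'
  -- Fourier coefficients are summable
  have hsummable : Summable (fourierCoeff (⇑F)) :=
    summable_ccoef.congr fun n => (coeff_eq n).symm
  -- pointwise convergence of the Fourier series at the sample points
  have hpt : ∀ a ∈ Finset.range m,
      HasSum (fun n : ℤ => ccoef n • (fourier n (((Real.pi * a / m : ℝ)) : AddCircle Real.pi) : ℂ))
        ((|Real.cos (Real.pi * a / m)| : ℝ) : ℂ) := by
    intro a _
    have h := has_pointwise_sum_fourier_series_of_summable hsummable
      (((Real.pi * a / m : ℝ)) : AddCircle Real.pi)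
    rw [F_apply] at h
    refine h.congr_fun fun n => ?_
    rw [coeff_eq]
  have hsum1 : HasSum
      (fun n : ℤ => ∑ a ∈ Finset.range m,
        ccoef n • (fourier n (((Real.pi * a / m : ℝ)) : AddCircle Real.pi) : ℂ))
      (∑ a ∈ Finset.range m, ((|Real.cos (Real.pi * a / m)| : ℝ) : ℂ)) :=
    hasSum_sum hpt
  -- identify the summand with an indicator function
  set G : ℤ → ℂ := fun n => if (m : ℤ) ∣ n then (m : ℂ) * ccoef n else 0 with hGdef
  have hGfun : (fun n : ℤ => ∑ a ∈ Finset.range m,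
      ccoef n • (fourier n (((Real.pi * a / m : ℝ)) : AddCircle Real.pi) : ℂ)) = G := by
    funext n
    simp only [smul_eq_mul, ← Finset.mul_sum]
    rw [fourier_sum_eq m hm n, hGdef]
    by_cases h : (m : ℤ) ∣ n <;> simp [h, mul_comm]
  rw [hGfun] at hsum1
  -- the given series, complexified
  have hS' : HasSum (fun s : ℕ =>
      (((-1 : ℝ) ^ ((s + 1) * m) / (4 * (((s + 1) * m : ℕ) : ℝ) ^ 2 - 1) : ℝ) : ℂ)) ((S : ℝ) : ℂ) :=
    Complex.hasSum_ofReal.2 hS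
  set c : ℂ := -(2 * (m : ℂ) / (Real.pi : ℂ)) * (S : ℝ) with hcdef
  have hA0 : HasSum (fun s : ℕ => G (((s + 1) * m : ℕ) : ℤ)) c := by
    have h := hS'.mul_left (-(2 * (m : ℂ) / (Real.pi : ℂ)))
    refine h.congr_fun fun s => ?_
    have hdvd : (m : ℤ) ∣ (((s + 1) * m : ℕ) : ℤ) := by
      refine ⟨(s + 1 : ℕ), ?_⟩
      push_cast; ring
    rw [hGdef]
    simp only [hdvd, if_true]
    rw [ccoef]
    have hzpow : ((-1 : ℂ)) ^ ((((s + 1) * m : ℕ) : ℤ)) = ((-1 : ℂ)) ^ ((s + 1) * m : ℕ) := by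
      rw [zpow_natCast]
    rw [hzpow]
    have hterm : (((-1 : ℝ) ^ ((s + 1) * m) / (4 * (((s + 1) * m : ℕ) : ℝ) ^ 2 - 1) : ℝ) : ℂ)
        = (-1 : ℂ) ^ ((s + 1) * m) / (4 * ((((s + 1) * m : ℕ)) : ℂ) ^ 2 - 1) := by
      push_cast; ring
    rw [hterm]
    have hswap : (1 : ℂ) - 4 * ((((s + 1) * m : ℕ) : ℤ) : ℂ) ^ 2
        = -(4 * ((((s + 1) * m : ℕ)) : ℂ) ^ 2 - 1) := by
      push_cast; ring
    rw [hswap, div_neg]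
    ring
  -- sums over positive integers
  set ι : ℕ → ℕ := fun s => (s + 1) * m - 1 with hιdef
  have hι : Function.Injective ι := by
    intro s t hst
    rw [hιdef] at hst
    simp only at hst
    have h1 : (s + 1) * m = (t + 1) * m := by
      have hs1 : 1 ≤ (s + 1) * m := Nat.one_le_iff_ne_zero.2 (by positivity)
      have ht1 : 1 ≤ (t + 1) * m := Nat.one_le_iff_ne_zero.2 (by positivity)
      omega
    have := Nat.eq_of_mul_eq_mul_right hm0 h1
    omega
  have hA1 : HasSum (fun p : ℕ => G ((p : ℤ) + 1)) c := by
    rw [← Function.Injective.hasSum_iff hι]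
    · refine hA0.congr_fun fun s => ?_
      have h1 : ((ι s : ℤ) + 1) = (((s + 1) * m : ℕ) : ℤ) := by
        rw [hιdef]
        have hs1 : 1 ≤ (s + 1) * m := Nat.one_le_iff_ne_zero.2 (by positivity)
        push_cast [Nat.cast_sub hs1]
        ring
      rw [Function.comp_apply, h1]
    · intro p hp
      rw [hGdef]
      have hnd : ¬ ((m : ℤ) ∣ ((p : ℤ) + 1)) := by
        intro hdvd
        have hdvd' : m ∣ (p + 1) := by
          have : ((p : ℤ) + 1) = ((p + 1 : ℕ) : ℤ) := by push_cast; ring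
          rw [this] at hdvd
          exact_mod_cast hdvd
        obtain ⟨k, hk⟩ := hdvd'
        have hk1 : 1 ≤ k := by
          rcases Nat.eq_zero_or_pos k with h | h
          · subst h; simp at hk
          · exact h
        apply hp
        refine ⟨k - 1, ?_⟩
        rw [hιdef]
        simp only
        have hkk : k - 1 + 1 = k := by omega
        rw [hkk, Nat.mul_comm]
        omega
      simp [hnd]
  have hA1' : HasSum (fun p : ℕ => G (((p + 1 : ℕ) : ℕ) : ℤ)) c :=
    hA1.congr_fun fun p => congrArg G (by push_cast; ring)
  have hA2 : HasSum (fun n : ℕ => G (n : ℤ)) (c + G 0) := by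
    have h := (hasSum_nat_add_iff (f := fun n : ℕ => G (n : ℤ)) 1).1 hA1'
    simpa using h
  have hGeven : ∀ n : ℤ, G (-n) = G n := by
    intro n
    rw [hGdef]
    simp only [dvd_neg, ccoef_even]
  have hA3 : HasSum (fun p : ℕ => G (-(((p : ℤ)) + 1))) c := by
    refine hA1.congr_fun fun p => ?_
    rw [hGeven ((p : ℤ) + 1)]
  have htotal : HasSum G ((c + G 0) + c) := HasSum.of_nat_of_neg_add_one hA2 hA3
  -- uniqueness of sums
  have huniq := hsum1.unique htotal
  have hG0 : G 0 = 2 * (m : ℂ) / (Real.pi : ℂ) := by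
    rw [hGdef]
    simp only [dvd_zero, if_true]
    rw [ccoef]
    push_cast
    field_simp
    ring
  have hval : ((c + G 0) + c) = ((2 * (m : ℝ) / Real.pi * (1 - 2 * S) : ℝ) : ℂ) := by
    rw [hG0, hcdef]
    push_cast
    ring
  rw [hval] at huniq
  have hlhs : (∑ a ∈ Finset.range m, ((|Real.cos (Real.pi * a / m)| : ℝ) : ℂ))
      = ((∑ a ∈ Finset.range m, |Real.cos (Real.pi * a / m)| : ℝ) : ℂ) := by
    push_cast
    rfl
  rw [hlhs] at huniq
  have hreal : (∑ a ∈ Finset.range m, |Real.cos (Real.pi * a / m)|)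
      = 2 * (m : ℝ) / Real.pi * (1 - 2 * S) := by
    exact_mod_cast huniq
  rw [hreal]
  field_simp
end
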